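/- arXiv:1202.4302 — 7 statements merged into one kernel-verified Lean document; each statement's English description precedes it below -/
import Mathlib

section
/- Let k ≥ 2 be an integer, 0 < a ≤ 1 real, and let f(z) = (k/(k+1))·a·z^(k+1) − (1+z)^k + b where b = (1+z₀)^(k−1)·(1 + z₀/(k+1)) and z₀ is the unique positive root of a·z^k = (1+z)^(k−1). Then f(z) ≥ 0 for all z > 0. -/
theorem stmt_7 (k : ℕ) (hk : 2 ≤ k) (a : ℝ) (ha0 : 0 < a) (ha1 : a ≤ 1)
    (z₀ : ℝ) (hz₀ : 0 < z₀) (hroot : a * z₀ ^ k = (1 + z₀) ^ (k - 1))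
    (huniq : ∀ z : ℝ, 0 < z → a * z ^ k = (1 + z) ^ (k - 1) → z = z₀) :
    ∀ z : ℝ, 0 < z →
      ((k : ℝ) / (k + 1)) * a * z ^ (k + 1) - (1 + z) ^ k
        + (1 + z₀) ^ (k - 1) * (1 + z₀ / (k + 1)) ≥ 0 := by
  obtain ⟨m, rfl⟩ : ∃ m, k = m + 1 := ⟨k - 1, by omega⟩
  have hm : 1 ≤ m := by omega
  simp only [Nat.add_sub_cancel] at hroot huniq ⊢
  set g : ℝ → ℝ := fun z => a * z ^ (m + 1) - (1 + z) ^ m with hg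
  have hg_cont : Continuous g := by
    apply Continuous.sub
    · exact continuous_const.mul (continuous_pow _)
    · exact (continuous_const.add continuous_id).pow m
  -- g < 0 on (0,1)
  have hg_small : ∀ t : ℝ, 0 < t → t < 1 → g t < 0 := by
    intro t ht ht1
    have h1 : a * t ^ (m + 1) < 1 := by
      calc a * t ^ (m + 1) ≤ 1 * t ^ (m + 1) := by
              apply mul_le_mul_of_nonneg_right ha1 (by positivity)
        _ = t ^ (m + 1) := one_mul _
        _ < 1 := pow_lt_one₀ ht.le ht1 (by omega)
    have h2 : (1 : ℝ) ≤ (1 + t) ^ m := one_le_pow₀ (by linarith)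
    simp only [hg]; linarith
  -- g ≤ 0 for 0 < z < z₀
  have hsign_lt : ∀ z : ℝ, 0 < z → z < z₀ → g z ≤ 0 := by
    intro z hz hzlt
    by_contra h
    push_neg at h
    set t : ℝ := min z 1 / 2 with ht
    have ht0 : 0 < t := by positivity
    have htz : t < z := by
      have : t ≤ z / 2 := by
        have := min_le_left z 1; rw [ht]; linarith
      linarith
    have ht1 : t < 1 := by
      have : t ≤ 1 / 2 := by have := min_le_right z 1; rw [ht]; linarith
      linarith
    have hgt : g t < 0 := hg_small t ht0 ht1
    have : (0 : ℝ) ∈ Set.Ioo (g t) (g z) := ⟨hgt, h⟩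
    obtain ⟨c, hc, hgc⟩ := intermediate_value_Ioo htz.le (hg_cont.continuousOn) this
    have hc0 : 0 < c := lt_trans ht0 hc.1
    have hcroot : a * c ^ (m + 1) = (1 + c) ^ m := by
      have := hgc; simp only [hg] at this; linarith
    have := huniq c hc0 hcroot
    linarith [hc.2]
  -- g ≥ 0 for z > z₀
  have hsign_gt : ∀ z : ℝ, z₀ < z → 0 ≤ g z := by
    intro z hzgt
    by_contra h
    push_neg at h
    set M : ℝ := max (z + 1) (2 ^ m / a + 1) with hM
    have hM1 : z + 1 ≤ M := le_max_left _ _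
    have hM2 : 2 ^ m / a + 1 ≤ M := le_max_right _ _
    have hMz : z < M := by linarith
    have hMpos : 0 < M := by linarith [hz₀, hzgt]
    have hMbig : 2 ^ m < a * M := by
      have h1 : 2 ^ m / a < M := by linarith
      calc (2:ℝ) ^ m = a * (2 ^ m / a) := by field_simp
        _ < a * M := by exact mul_lt_mul_of_pos_left h1 ha0
    have hgM : 0 < g M := by
      have hM1' : (1 : ℝ) ≤ M := by linarith [hz₀, hzgt]
      have h1 : (1 + M) ^ m ≤ (2 * M) ^ m := by
        apply pow_le_pow_left₀ (by linarith) (by linarith) m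
      have h2 : (2 * M) ^ m = 2 ^ m * M ^ m := mul_pow 2 M m
      have h3 : 2 ^ m * M ^ m < (a * M) * M ^ m := by
        apply mul_lt_mul_of_pos_right hMbig (by positivity)
      have h4 : (a * M) * M ^ m = a * M ^ (m + 1) := by ring
      simp only [hg]; nlinarith
    have : (0 : ℝ) ∈ Set.Ioo (g z) (g M) := ⟨h, hgM⟩
    obtain ⟨c, hc, hgc⟩ := intermediate_value_Ioo hMz.le (hg_cont.continuousOn) this
    have hc0 : 0 < c := by linarith [hc.1, hzgt, hz₀]
    have hcroot : a * c ^ (m + 1) = (1 + c) ^ m := by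
      have := hgc; simp only [hg] at this; linarith
    have := huniq c hc0 hcroot
    linarith [hc.1]
  -- the function F
  set F : ℝ → ℝ := fun z =>
    ((m + 1 : ℕ) : ℝ) / (((m + 1 : ℕ) : ℝ) + 1) * a * z ^ (m + 1 + 1) - (1 + z) ^ (m + 1)
      + (1 + z₀) ^ m * (1 + z₀ / (((m + 1 : ℕ) : ℝ) + 1)) with hF
  have hkR : (((m + 1 : ℕ) : ℝ)) = (m : ℝ) + 1 := by push_cast; ring
  have hderiv : ∀ x : ℝ, HasDerivAt F (((m : ℝ) + 1) * g x) x := by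
    intro x
    have h1 : HasDerivAt (fun z : ℝ => z ^ (m + 1 + 1))
        ((m + 1 + 1 : ℕ) * x ^ (m + 1)) x := by
      simpa using hasDerivAt_pow (m + 1 + 1) x
    have h2 : HasDerivAt (fun z : ℝ => (1 + z) ^ (m + 1))
        ((m + 1 : ℕ) * (1 + x) ^ m * 1) x := by
      have := (hasDerivAt_pow (m + 1) (1 + x)).comp x
        (((hasDerivAt_id x).const_add 1))
      simpa [Function.comp_def] using this
    have h3 := ((h1.const_mul (((m + 1 : ℕ) : ℝ) / (((m + 1 : ℕ) : ℝ) + 1) * a)).sub h2).add_const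
      ((1 + z₀) ^ m * (1 + z₀ / (((m + 1 : ℕ) : ℝ) + 1)))
    refine h3.congr_deriv ?_
    simp only [hg]
    push_cast
    have hne : ((m : ℝ) + 1) + 1 ≠ 0 := by positivity
    field_simp
  have hFz₀ : F z₀ = 0 := by
    simp only [hF, hkR]
    have e1 : a * z₀ ^ (m + 1 + 1) = (1 + z₀) ^ m * z₀ := by
      rw [pow_succ]
      rw [← mul_assoc, hroot]
    have e2 : (1 + z₀) ^ (m + 1) = (1 + z₀) ^ m * (1 + z₀) := pow_succ _ _
    have hne : (m : ℝ) + 1 + 1 ≠ 0 := by positivity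
    field_simp
    nlinarith [e1, e2]
  intro z hz
  show F z ≥ 0
  rcases lt_trichotomy z z₀ with hlt | heq | hgt
  · -- antitone on [z, z₀]
    have hanti : AntitoneOn F (Set.Icc z z₀) := by
      apply antitoneOn_of_deriv_nonpos (convex_Icc z z₀)
      · exact fun x _ => (hderiv x).differentiableAt.continuousAt.continuousWithinAt
      · intro x hx
        exact ((hderiv x).differentiableAt).differentiableWithinAt
      · intro x hx
        rw [interior_Icc] at hx
        rw [(hderiv x).deriv]
        have := hsign_lt x (lt_trans hz hx.1) hx.2
        have hm1 : (0:ℝ) < (m : ℝ) + 1 := by positivity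
        nlinarith
    have := hanti (Set.left_mem_Icc.mpr hlt.le) (Set.right_mem_Icc.mpr hlt.le) hlt.le
    linarith [hFz₀]
  · rw [heq]; linarith [hFz₀]
  · -- monotone on [z₀, z]
    have hmono : MonotoneOn F (Set.Icc z₀ z) := by
      apply monotoneOn_of_deriv_nonneg (convex_Icc z₀ z)
      · exact fun x _ => (hderiv x).differentiableAt.continuousAt.continuousWithinAt
      · intro x hx
        exact ((hderiv x).differentiableAt).differentiableWithinAt
      · intro x hx
        rw [interior_Icc] at hx
        rw [(hderiv x).deriv]
        have := hsign_gt x hx.1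
        positivity
    have := hmono (Set.left_mem_Icc.mpr hgt.le) (Set.right_mem_Icc.mpr hgt.le) hgt.le
    linarith [hFz₀]
end

section
/- For any finite multiset A of nonnegative reals and any positive integer k, Ψ_k(A)^(k+1) ≤ Ψ_{k+1}(A)^k. -/
/-- Complete homogeneous symmetric polynomial of degree `k` in the elements of `l`. -/
def hpoly : ℕ → List ℝ → ℝ
  | 0, _ => 1
  | _ + 1, [] => 0
  | k + 1, x :: l => x * hpoly k (x :: l) + hpoly (k + 1) l
termination_by k l => (k, l.length)

/-- `Ψ_k(A) = k! · h_k(A)`. -/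
noncomputable def Psi (k : ℕ) (l : List ℝ) : ℝ := (Nat.factorial k : ℝ) * hpoly k l

theorem hpoly_nonneg : ∀ (k : ℕ) (l : List ℝ), (∀ x ∈ l, 0 ≤ x) → 0 ≤ hpoly k l
  | 0, _, _ => by rw [hpoly]; norm_num
  | _ + 1, [], _ => by rw [hpoly]
  | k + 1, x :: l, h => by
      rw [hpoly]
      have h1 := hpoly_nonneg k (x :: l) h
      have h2 := hpoly_nonneg (k + 1) l (fun y hy => h y (List.mem_cons_of_mem x hy))
      have hx : 0 ≤ x := h x List.mem_cons_self
      positivity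
termination_by k l => (k, l.length)

lemma Psi_nonneg (k : ℕ) (l : List ℝ) (hl : ∀ x ∈ l, 0 ≤ x) : 0 ≤ Psi k l := by
  have := hpoly_nonneg k l hl
  unfold Psi
  positivity

lemma Psi_zero (l : List ℝ) : Psi 0 l = 1 := by
  unfold Psi; rw [hpoly]; simp

lemma Psi_nil (k : ℕ) : Psi (k + 1) [] = 0 := by
  unfold Psi; rw [hpoly]; simp

lemma Psi_cons (k : ℕ) (x : ℝ) (l : List ℝ) :
    Psi (k + 1) (x :: l) = (k + 1) * x * Psi k (x :: l) + Psi (k + 1) l := by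
  unfold Psi
  rw [hpoly, Nat.factorial_succ]
  push_cast
  ring

/-- Binomial-convolution expansion of `Psi` on a cons. -/
lemma Psi_conv (x : ℝ) (l : List ℝ) (k : ℕ) :
    Psi k (x :: l) =
      ∑ j ∈ Finset.range (k + 1),
        (k.choose j : ℝ) * ((j.factorial : ℝ) * x ^ j * Psi (k - j) l) := by
  induction k with
  | zero => simp [Psi_zero]
  | succ k ih =>
      rw [Psi_cons, ih]
      conv_rhs => rw [Finset.sum_range_succ']
      have h0 : ((k+1).choose 0 : ℝ) * ((Nat.factorial 0 : ℝ) * x ^ 0 * Psi (k + 1 - 0) l)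
          = Psi (k + 1) l := by simp [Nat.factorial]
      rw [h0]
      congr 1
      rw [Finset.mul_sum]
      apply Finset.sum_congr rfl
      intro j hj
      have hc : ((k+1).choose (j+1) : ℝ) * ((j+1).factorial : ℝ)
          = (k + 1 : ℝ) * ((k.choose j : ℝ) * (j.factorial : ℝ)) := by
        have h := Nat.succ_descFactorial_succ k j
        rw [Nat.descFactorial_eq_factorial_mul_choose,
          Nat.descFactorial_eq_factorial_mul_choose] at h
        have h2 := congrArg (fun n : ℕ => (n : ℝ)) h
        push_cast at h2
        linarith
      have hsub : k + 1 - (j + 1) = k - j := Nat.succ_sub_succ k j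
      rw [hsub]
      linear_combination (-(x ^ (j + 1) * Psi (k - j) l)) * hc

/-- Pascal-type resummation. -/
lemma pascal_sum (n : ℕ) (t : ℕ → ℝ) :
    ∑ j ∈ Finset.range (n + 2), ((n+1).choose j : ℝ) * t j
      = ∑ j ∈ Finset.range (n + 1), (n.choose j : ℝ) * (t j + t (j + 1)) := by
  have lhs : ∑ j ∈ Finset.range (n + 2), ((n+1).choose j : ℝ) * t j
      = (∑ i ∈ Finset.range (n + 1), ((n.choose i : ℝ) + (n.choose (i+1) : ℝ)) * t (i+1))
        + t 0 := by
    rw [Finset.sum_range_succ']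
    simp [Nat.choose_succ_succ]
  have rhs2 : ∑ j ∈ Finset.range (n + 2), (n.choose j : ℝ) * t j
      = (∑ i ∈ Finset.range (n + 1), (n.choose (i+1) : ℝ) * t (i+1)) + t 0 := by
    rw [Finset.sum_range_succ']
    simp
  have rhs3 : ∑ j ∈ Finset.range (n + 2), (n.choose j : ℝ) * t j
      = ∑ j ∈ Finset.range (n + 1), (n.choose j : ℝ) * t j := by
    rw [Finset.sum_range_succ]
    simp [Nat.choose_eq_zero_of_lt (Nat.lt_succ_self n)]
  rw [lhs]
  have hsplit : (∑ i ∈ Finset.range (n + 1), ((n.choose i : ℝ) + (n.choose (i+1) : ℝ)) * t (i+1))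
      = (∑ i ∈ Finset.range (n + 1), (n.choose i : ℝ) * t (i+1))
        + ∑ i ∈ Finset.range (n + 1), (n.choose (i+1) : ℝ) * t (i+1) := by
    rw [← Finset.sum_add_distrib]
    exact Finset.sum_congr rfl fun j hj => by ring
  rw [hsplit]
  have key : (∑ i ∈ Finset.range (n + 1), (n.choose (i+1) : ℝ) * t (i+1)) + t 0
      = ∑ j ∈ Finset.range (n + 1), (n.choose j : ℝ) * t j := by
    have := rhs2.symm.trans rhs3
    linarith
  rw [add_assoc, key, ← Finset.sum_add_distrib]
  exact Finset.sum_congr rfl fun j hj => by ring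

/-- Cauchy–Schwarz with pointwise `B² ≤ A·C`. -/
lemma cs_lemma {ι : Type*} (s : Finset ι) (w A B C : ι → ℝ)
    (hw : ∀ i ∈ s, 0 ≤ w i) (hB : ∀ i ∈ s, 0 ≤ B i)
    (hA : ∀ i ∈ s, 0 ≤ A i) (hC : ∀ i ∈ s, 0 ≤ C i)
    (h : ∀ i ∈ s, B i ^ 2 ≤ A i * C i) :
    (∑ i ∈ s, w i * B i) ^ 2 ≤ (∑ i ∈ s, w i * A i) * ∑ i ∈ s, w i * C i := by
  have key : ∀ i ∈ s, w i * B i ≤ Real.sqrt (w i * A i) * Real.sqrt (w i * C i) := by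
    intro i hi
    rw [← Real.sqrt_mul (mul_nonneg (hw i hi) (hA i hi))]
    rw [Real.le_sqrt (mul_nonneg (hw i hi) (hB i hi))
      (mul_nonneg (mul_nonneg (hw i hi) (hA i hi)) (mul_nonneg (hw i hi) (hC i hi)))]
    calc (w i * B i) ^ 2 = w i ^ 2 * B i ^ 2 := by ring
      _ ≤ w i ^ 2 * (A i * C i) := mul_le_mul_of_nonneg_left (h i hi) (sq_nonneg _)
      _ = w i * A i * (w i * C i) := by ring
  have h1 : ∑ i ∈ s, w i * B i ≤ ∑ i ∈ s, Real.sqrt (w i * A i) * Real.sqrt (w i * C i) :=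
    Finset.sum_le_sum key
  have h0 : 0 ≤ ∑ i ∈ s, w i * B i :=
    Finset.sum_nonneg fun i hi => mul_nonneg (hw i hi) (hB i hi)
  calc (∑ i ∈ s, w i * B i) ^ 2
      ≤ (∑ i ∈ s, Real.sqrt (w i * A i) * Real.sqrt (w i * C i)) ^ 2 :=
        pow_le_pow_left₀ h0 h1 2
    _ ≤ (∑ i ∈ s, Real.sqrt (w i * A i) ^ 2) * ∑ i ∈ s, Real.sqrt (w i * C i) ^ 2 :=
        Finset.sum_mul_sq_le_sq_mul_sq s _ _
    _ = (∑ i ∈ s, w i * A i) * ∑ i ∈ s, w i * C i := by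
        congr 1
        · exact Finset.sum_congr rfl fun i hi =>
            Real.sq_sqrt (mul_nonneg (hw i hi) (hA i hi))
        · exact Finset.sum_congr rfl fun i hi =>
            Real.sq_sqrt (mul_nonneg (hw i hi) (hC i hi))

/-- Log-convexity of `Psi`. -/
theorem Psi_logconvex (l : List ℝ) (hl : ∀ x ∈ l, 0 ≤ x) :
    ∀ k : ℕ, Psi (k + 1) l ^ 2 ≤ Psi k l * Psi (k + 2) l := by
  induction l with
  | nil =>
      intro k
      rw [Psi_nil]
      have h2 : Psi (k + 2) ([] : List ℝ) = 0 := Psi_nil (k + 1)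
      rw [h2]
      simp
  | cons x l ih =>
      have hx : 0 ≤ x := hl x List.mem_cons_self
      have hl' : ∀ y ∈ l, 0 ≤ y := fun y hy => hl y (List.mem_cons_of_mem x hy)
      have hm := ih hl'
      have hmn : ∀ j, 0 ≤ Psi j l := fun j => Psi_nonneg j l hl'
      intro k
      set u : ℕ → ℝ := fun j => (j.factorial : ℝ) * x ^ j with hu
      set m : ℕ → ℝ := fun j => Psi j l with hmdef
      have hun : ∀ j, 0 ≤ u j := fun j => by
        simp only [hu]; positivity
      have huc : ∀ j, u (j+1) ^ 2 ≤ u j * u (j+2) := by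
        intro j
        have h1 : ((j+1).factorial : ℝ) ^ 2 ≤ (j.factorial : ℝ) * ((j+2).factorial : ℝ) := by
          have hn : (j+1).factorial * (j+1).factorial ≤ j.factorial * (j+2).factorial := by
            rw [Nat.factorial_succ (j+1), Nat.factorial_succ j]
            calc (j+1) * j.factorial * ((j+1).factorial)
                ≤ (j+2) * j.factorial * ((j+1).factorial) :=
                  Nat.mul_le_mul_right _ (Nat.mul_le_mul_right _ (by omega))
              _ = j.factorial * ((j+2) * (j+1).factorial) := by ring
          calc ((j+1).factorial : ℝ) ^ 2
              = ((Nat.factorial (j+1) * Nat.factorial (j+1) : ℕ) : ℝ) := by push_cast; ring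
            _ ≤ ((j.factorial * (j+2).factorial : ℕ) : ℝ) := by exact_mod_cast hn
            _ = (j.factorial : ℝ) * ((j+2).factorial : ℝ) := by push_cast; ring
        have hxp : (0:ℝ) ≤ x ^ (j+1) * x ^ (j+1) := by positivity
        simp only [hu]
        calc (((j+1).factorial : ℝ) * x ^ (j+1)) ^ 2
            = ((j+1).factorial : ℝ) ^ 2 * (x ^ (j+1) * x ^ (j+1)) := by ring
          _ ≤ (j.factorial : ℝ) * ((j+2).factorial : ℝ) * (x ^ (j+1) * x ^ (j+1)) :=
              mul_le_mul_of_nonneg_right h1 hxp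
          _ = (j.factorial : ℝ) * x ^ j * (((j+2).factorial : ℝ) * x ^ (j+2)) := by ring
      have hmn' : ∀ j, 0 ≤ m j := fun j => by
        simp only [hmdef]; exact hmn j
      have esub : ∀ j : ℕ, k + 2 - (j + 1) = k + 1 - j := fun j => by omega
      have esub2 : ∀ a : ℕ, a + 1 + 1 = a + 2 := fun a => rfl
      -- the three convolution identities with common weight `C(k,j)`
      have hck : Psi k (x :: l) =
          ∑ j ∈ Finset.range (k + 1), (k.choose j : ℝ) * (u j * m (k - j)) := by
        rw [Psi_conv]
      have hck1 : Psi (k + 1) (x :: l) =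
          ∑ j ∈ Finset.range (k + 1), (k.choose j : ℝ) *
            (u j * m (k + 1 - j) + u (j + 1) * m (k - j)) := by
        have hp := pascal_sum k (fun j => u j * m (k + 1 - j))
        simp only [Nat.add_sub_add_right] at hp
        rw [Psi_conv, ← hp]
      have hck2 : Psi (k + 2) (x :: l) =
          ∑ j ∈ Finset.range (k + 1), (k.choose j : ℝ) *
            (u j * m (k + 2 - j) + 2 * (u (j + 1) * m (k + 1 - j)) + u (j + 2) * m (k - j)) := by
        have hp1 := pascal_sum (k + 1) (fun j => u j * m (k + 2 - j))
        have hp2 := pascal_sum k (fun j => u j * m (k + 2 - j) + u (j + 1) * m (k + 1 - j))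
        simp only [esub, esub2, Nat.add_sub_add_right] at hp1 hp2
        calc Psi (k + 2) (x :: l)
            = ∑ j ∈ Finset.range (k + 2 + 1),
              ((k+2).choose j : ℝ) * (u j * m (k + 2 - j)) := Psi_conv x l (k + 2)
          _ = ∑ j ∈ Finset.range (k + 2), ((k+1).choose j : ℝ) *
              (u j * m (k + 2 - j) + u (j + 1) * m (k + 1 - j)) := hp1
          _ = ∑ j ∈ Finset.range (k + 1), (k.choose j : ℝ) *
              ((u j * m (k + 2 - j) + u (j + 1) * m (k + 1 - j)) +
                (u (j + 1) * m (k + 1 - j) + u (j + 2) * m (k - j))) := hp2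
          _ = _ := Finset.sum_congr rfl fun j hj => by ring
      rw [hck, hck1, hck2]
      apply cs_lemma
      · intro j hj; positivity
      · intro j hj
        exact add_nonneg (mul_nonneg (hun j) (hmn' _)) (mul_nonneg (hun (j+1)) (hmn' _))
      · intro j hj
        exact mul_nonneg (hun j) (hmn' _)
      · intro j hj
        exact add_nonneg (add_nonneg (mul_nonneg (hun j) (hmn' _))
          (mul_nonneg (by norm_num) (mul_nonneg (hun (j+1)) (hmn' _))))
          (mul_nonneg (hun (j+2)) (hmn' _))
      · intro j hj
        rw [Finset.mem_range] at hj
        have e1 : k + 1 - j = (k - j) + 1 := by omega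
        have e2 : k + 2 - j = (k - j) + 2 := by omega
        rw [e1, e2]
        set e := k - j with he
        have hm1 : m (e + 1) ^ 2 ≤ m e * m (e + 2) := hm e
        have hu1 : u (j + 1) ^ 2 ≤ u j * u (j + 2) := huc j
        have h1 : u j ^ 2 * m (e + 1) ^ 2 ≤ u j ^ 2 * (m e * m (e + 2)) :=
          mul_le_mul_of_nonneg_left hm1 (sq_nonneg _)
        have h2 : u (j + 1) ^ 2 * m e ^ 2 ≤ (u j * u (j + 2)) * m e ^ 2 :=
          mul_le_mul_of_nonneg_right hu1 (sq_nonneg _)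
        nlinarith [mul_nonneg (hun j) (hmn' (e + 1)), mul_nonneg (hun (j + 1)) (hmn' e),
          mul_nonneg (mul_nonneg (hun j) (hmn' (e + 1))) (mul_nonneg (hun (j + 1)) (hmn' e))]

lemma psi_step (l : List ℝ) (hl : ∀ x ∈ l, 0 ≤ x) :
    ∀ n : ℕ, Psi (n + 1) l ^ (n + 2) ≤ Psi (n + 2) l ^ (n + 1) := by
  intro n
  induction n with
  | zero =>
      have lc := Psi_logconvex l hl 0
      rw [Psi_zero] at lc
      simpa using lc
  | succ n ih =>
      have lc' : Psi (n + 2) l ^ 2 ≤ Psi (n + 1) l * Psi (n + 3) l := Psi_logconvex l hl (n + 1)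
      have hnn : ∀ j, 0 ≤ Psi j l := fun j => Psi_nonneg j l hl
      show Psi (n + 2) l ^ (n + 3) ≤ Psi (n + 3) l ^ (n + 2)
      rcases eq_or_lt_of_le (hnn (n + 2)) with h0 | hpos
      · rw [← h0, zero_pow (by omega : n + 3 ≠ 0)]
        exact pow_nonneg (hnn _) _
      · have step1 : Psi (n + 2) l ^ (2 * (n + 2)) ≤
            Psi (n + 1) l ^ (n + 2) * Psi (n + 3) l ^ (n + 2) := by
          rw [← mul_pow, pow_mul]
          exact pow_le_pow_left₀ (sq_nonneg _) lc' (n + 2)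
        have step2 : Psi (n + 1) l ^ (n + 2) * Psi (n + 3) l ^ (n + 2) ≤
            Psi (n + 2) l ^ (n + 1) * Psi (n + 3) l ^ (n + 2) :=
          mul_le_mul_of_nonneg_right ih (pow_nonneg (hnn _) _)
        have key : Psi (n + 2) l ^ (n + 1) * Psi (n + 2) l ^ (n + 3) ≤
            Psi (n + 2) l ^ (n + 1) * Psi (n + 3) l ^ (n + 2) := by
          rw [← pow_add, show n + 1 + (n + 3) = 2 * (n + 2) from by omega]
          exact step1.trans step2
        exact le_of_mul_le_mul_left key (pow_pos hpos (n + 1))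

theorem stmt_11 (l : List ℝ) (hl : ∀ x ∈ l, 0 ≤ x) (k : ℕ) (hk : 1 ≤ k) :
    Psi k l ^ (k + 1) ≤ Psi (k + 1) l ^ k := by
  obtain ⟨n, rfl⟩ : ∃ n, k = n + 1 := ⟨k - 1, by omega⟩
  exact psi_step l hl n
end

section
/- For any finite multiset A of nonnegative reals, any nonnegative real b, and any positive integer k, Ψ_k(A ∪ {b}) = Ψ_k(A) + k·b·Ψ_{k−1}(A ∪ {b}). -/
theorem stmt_12 (l : List ℝ) (hl : ∀ x ∈ l, 0 ≤ x) (b : ℝ) (hb : 0 ≤ b)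
    (k : ℕ) (hk : 1 ≤ k) :
    Psi k (b :: l) = Psi k l + (k : ℝ) * b * Psi (k - 1) (b :: l) := by
  obtain ⟨m, rfl⟩ := Nat.exists_eq_add_of_le hk
  simp only [Psi, hpoly, Nat.add_sub_cancel_left, Nat.factorial_succ, Nat.add_comm 1 m]
  push_cast
  ring
end

section
/- Let P be a positive integer, let (n_i) and (m_i) be nonnegative reals for 1 ≤ i ≤ P, let (q_i) be a positive strictly increasing sequence, and define A_{i,j} = ∑_{t<i} n_t·q_t + j·q_i and B_{i,j} = ∑_{t<i} m_t·q_t + j·q_i. Then for every positive integer k there exists a constant λ_k (depending only on k) such that ∑_{i=1}^P ∑_{j=1}^{m_i} (A_{i,n_i} + j·q_i)^k ≤ ((k+1)/(k+2))·∑_{i=1}^P ∑_{j=1}^{n_i} A_{i,j}^k + λ_k·∑_{i=1}^P ∑_{j=1}^{m_i} B_{i,j}^k. -/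
open Finset

namespace Stmt16

/-- prefix sum of workload: `Sp n q i = ∑_{1 ≤ t < i} n t * q t` -/
noncomputable def Sp (n : ℕ → ℕ) (q : ℕ → ℝ) (i : ℕ) : ℝ :=
  ∑ t ∈ Finset.Ico 1 i, (n t : ℝ) * q t

/-- number of "heavy" jobs at level `i` -/
noncomputable def hc (n m : ℕ → ℕ) (q : ℕ → ℝ) (θ : ℝ) (i : ℕ) : ℕ :=
  ((Finset.Icc 1 (m i)).filter
    (fun j : ℕ => θ * (Sp m q i + (j : ℝ) * q i) < Sp n q (i + 1))).card

lemma card_le_max' (s : Finset ℕ) (hs : s.Nonempty) (h1 : ∀ x ∈ s, 1 ≤ x) :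
    s.card ≤ s.max' hs := by
  have hsub : s ⊆ Finset.Icc 1 (s.max' hs) := fun x hx =>
    Finset.mem_Icc.mpr ⟨h1 x hx, Finset.le_max' s x hx⟩
  simpa using Finset.card_le_card hsub

section Main

variable {P k : ℕ} {n m : ℕ → ℕ} {q : ℕ → ℝ} {θ : ℝ}

lemma Sp_nonneg (hq : ∀ i ∈ Finset.Icc 1 P, 0 < q i) {i : ℕ} (hi : i ≤ P + 1) :
    0 ≤ Sp n q i := by
  apply Finset.sum_nonneg
  intro t ht
  rw [Finset.mem_Ico] at ht
  have hqt := hq t (Finset.mem_Icc.mpr ⟨ht.1, by omega⟩)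
  positivity

lemma Sp_mono (hq : ∀ i ∈ Finset.Icc 1 P, 0 < q i) {a b : ℕ} (hab : a ≤ b)
    (hb : b ≤ P + 1) : Sp n q a ≤ Sp n q b := by
  apply Finset.sum_le_sum_of_subset_of_nonneg
  · exact Finset.Ico_subset_Ico le_rfl hab
  · intro t ht _
    rw [Finset.mem_Ico] at ht
    have hqt := hq t (Finset.mem_Icc.mpr ⟨ht.1, by omega⟩)
    positivity

lemma q_le (hq : ∀ i ∈ Finset.Icc 1 P, 0 < q i)
    (hmono : ∀ i ∈ Finset.Icc 1 P, ∀ j ∈ Finset.Icc 1 P, i < j → q i < q j)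
    {t i : ℕ} (ht : t ∈ Finset.Icc 1 i) (hi : i ≤ P) : q t ≤ q i := by
  rw [Finset.mem_Icc] at ht
  rcases eq_or_lt_of_le ht.2 with h | h
  · rw [h]
  · exact le_of_lt (hmono t (Finset.mem_Icc.mpr ⟨ht.1, by omega⟩) i
      (Finset.mem_Icc.mpr ⟨by omega, hi⟩) h)

/-- key counting estimate at a single level `t` -/
lemma count_le (hq : ∀ i ∈ Finset.Icc 1 P, 0 < q i) {t : ℕ}
    (ht : t ∈ Finset.Icc 1 P) (X : ℝ) :
    q t * (((Finset.Icc 1 (n t)).filter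
        (fun j : ℕ => Sp n q t + (j : ℝ) * q t ≤ X)).card : ℝ)
      ≤ min (Sp n q (t + 1)) X - min (Sp n q t) X := by
    have hqt : 0 < q t := hq t ht
    have ht1 : 1 ≤ t := (Finset.mem_Icc.mp ht).1
    set s := (Finset.Icc 1 (n t)).filter
      (fun j : ℕ => Sp n q t + (j : ℝ) * q t ≤ X) with hs
    have hsub : s ⊆ Finset.Icc 1 (n t) := Finset.filter_subset _ _
    have hcard_n : s.card ≤ n t := by simpa using Finset.card_le_card hsub
    have hSp1 : Sp n q (t + 1) = Sp n q t + (n t : ℝ) * q t := by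
      rw [Sp, Sp, Finset.sum_Ico_succ_top ht1]
    have hnn : (0:ℝ) ≤ (n t : ℝ) * q t := by positivity
    rcases le_or_gt X (Sp n q t) with hX | hX
    · have hempty : s = ∅ := by
        rw [hs]
        apply Finset.filter_eq_empty_iff.mpr
        intro j hj
        rw [Finset.mem_Icc] at hj
        have h1 : (1:ℝ) ≤ (j:ℝ) := by exact_mod_cast hj.1
        have : (0:ℝ) < (j:ℝ) * q t := by nlinarith
        push_neg
        linarith
      rw [hempty]
      have h1 : min (Sp n q (t+1)) X = X := min_eq_right (by linarith)
      have h2 : min (Sp n q t) X = X := min_eq_right hX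
      rw [h1, h2]
      simp
    · have hkey : (s.card : ℝ) * q t ≤ X - Sp n q t := by
        rcases s.eq_empty_or_nonempty with he | hne
        · rw [he]; simp; linarith
        · have hjm := s.max'_mem hne
          have h1 : ∀ x ∈ s, 1 ≤ x := fun x hx => (Finset.mem_Icc.mp (hsub hx)).1
          have hcm : s.card ≤ s.max' hne := card_le_max' s hne h1
          simp only [hs, Finset.mem_filter] at hjm
          have hmax := hjm.2
          have hcm' : (s.card : ℝ) * q t ≤ (s.max' hne : ℝ) * q t := by
            apply mul_le_mul_of_nonneg_right _ hqt.le
            exact_mod_cast hcm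
          linarith
      have h2 : (s.card : ℝ) * q t ≤ (n t : ℝ) * q t := by
        apply mul_le_mul_of_nonneg_right _ hqt.le
        exact_mod_cast hcard_n
      have hmin := le_min (show (s.card:ℝ) * q t ≤ Sp n q (t+1) - Sp n q t by linarith)
        (show (s.card:ℝ) * q t ≤ X - Sp n q t by linarith)
      rw [min_sub_sub_right] at hmin
      have h3 : min (Sp n q t) X = Sp n q t := min_eq_left hX.le
      rw [h3]
      linarith

lemma telescope (g : ℕ → ℝ) (i : ℕ) :
    ∑ t ∈ Finset.Icc 1 i, (g (t + 1) - g t) = g (i + 1) - g 1 := by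
    induction i with
    | zero => simp
    | succ i ih =>
        rw [← Finset.Ico_add_one_right_eq_Icc] at ih ⊢
        rw [Finset.sum_Ico_succ_top (by omega), ih]
        ring

/-- the part of the `n`-cost above `X` and below `Sp n q (i+1)` is substantial -/
lemma slice_ge (hq : ∀ i ∈ Finset.Icc 1 P, 0 < q i)
    (hmono : ∀ i ∈ Finset.Icc 1 P, ∀ j ∈ Finset.Icc 1 P, i < j → q i < q j)
    {i : ℕ} (hi : i ∈ Finset.Icc 1 P) {X : ℝ} (hX0 : 0 ≤ X)
    (hXS : X ≤ Sp n q (i + 1)) :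
    X ^ k * (Sp n q (i + 1) - X) / q i ≤
      ∑ t ∈ Finset.Icc 1 i,
        ∑ j ∈ (Finset.Icc 1 (n t)).filter
            (fun j : ℕ => X < Sp n q t + (j : ℝ) * q t),
          (Sp n q t + (j : ℝ) * q t) ^ k := by
  classical
  have hi' := Finset.mem_Icc.mp hi
  have hqi : 0 < q i := hq i hi
  have hS1 : Sp n q 1 = 0 := by simp [Sp]
  have hSsum : Sp n q (i + 1) = ∑ t ∈ Finset.Icc 1 i, (n t : ℝ) * q t := by
    rw [Sp, Finset.Ico_add_one_right_eq_Icc]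
  -- counting bound on the small part
  have hsmall : ∑ t ∈ Finset.Icc 1 i, q t *
      (((Finset.Icc 1 (n t)).filter
        (fun j : ℕ => Sp n q t + (j : ℝ) * q t ≤ X)).card : ℝ) ≤ X := by
    have h1 : ∑ t ∈ Finset.Icc 1 i, q t *
        (((Finset.Icc 1 (n t)).filter
          (fun j : ℕ => Sp n q t + (j : ℝ) * q t ≤ X)).card : ℝ)
        ≤ ∑ t ∈ Finset.Icc 1 i,
            (min (Sp n q (t + 1)) X - min (Sp n q t) X) := by
      apply Finset.sum_le_sum
      intro t ht
      have ht' := Finset.mem_Icc.mp ht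
      exact count_le hq (Finset.mem_Icc.mpr ⟨ht'.1, le_trans ht'.2 hi'.2⟩) X
    rw [telescope (fun t => min (Sp n q t) X) i] at h1
    rw [hS1] at h1
    rw [min_eq_right hXS, min_eq_left hX0] at h1
    linarith
  -- big part count is substantial
  have hbig : Sp n q (i + 1) - X ≤ ∑ t ∈ Finset.Icc 1 i, q t *
      (((Finset.Icc 1 (n t)).filter
        (fun j : ℕ => X < Sp n q t + (j : ℝ) * q t)).card : ℝ) := by
    have hsplit : ∀ t ∈ Finset.Icc 1 i, q t *
        (((Finset.Icc 1 (n t)).filter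
          (fun j : ℕ => X < Sp n q t + (j : ℝ) * q t)).card : ℝ)
        = (n t : ℝ) * q t - q t *
          (((Finset.Icc 1 (n t)).filter
            (fun j : ℕ => Sp n q t + (j : ℝ) * q t ≤ X)).card : ℝ) := by
      intro t _
      have hcards := Finset.card_filter_add_card_filter_not
        (s := Finset.Icc 1 (n t)) (p := fun j : ℕ => Sp n q t + (j : ℝ) * q t ≤ X)
      have hfeq : (Finset.Icc 1 (n t)).filter
            (fun j : ℕ => ¬ (Sp n q t + (j : ℝ) * q t ≤ X))
          = (Finset.Icc 1 (n t)).filter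
            (fun j : ℕ => X < Sp n q t + (j : ℝ) * q t) := by
        apply Finset.filter_congr
        intro j _
        simp [not_le]
      rw [hfeq] at hcards
      have hcard_Icc : (Finset.Icc 1 (n t)).card = n t := by simp
      rw [hcard_Icc] at hcards
      have : (((Finset.Icc 1 (n t)).filter
            (fun j : ℕ => X < Sp n q t + (j : ℝ) * q t)).card : ℝ)
          = (n t : ℝ) - (((Finset.Icc 1 (n t)).filter
            (fun j : ℕ => Sp n q t + (j : ℝ) * q t ≤ X)).card : ℝ) := by
        have := congrArg (fun x : ℕ => (x : ℝ)) hcards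
        push_cast at this
        linarith
      rw [this]
      ring
    rw [Finset.sum_congr rfl hsplit, Finset.sum_sub_distrib, ← hSsum]
    linarith
  -- conclude
  have hXk : (0:ℝ) ≤ X ^ k := by positivity
  have step : ∀ t ∈ Finset.Icc 1 i,
      (q t * (((Finset.Icc 1 (n t)).filter
        (fun j : ℕ => X < Sp n q t + (j : ℝ) * q t)).card : ℝ)) * (X ^ k / q i)
      ≤ ∑ j ∈ (Finset.Icc 1 (n t)).filter
          (fun j : ℕ => X < Sp n q t + (j : ℝ) * q t),
          (Sp n q t + (j : ℝ) * q t) ^ k := by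
    intro t ht
    set c := (((Finset.Icc 1 (n t)).filter
        (fun j : ℕ => X < Sp n q t + (j : ℝ) * q t)).card : ℝ) with hcdef
    have hc0 : (0:ℝ) ≤ c := by positivity
    have hqt : q t ≤ q i := q_le hq hmono ht hi'.2
    have h2 : (q t * c) * (X ^ k / q i) ≤ (q i * c) * (X ^ k / q i) := by
      apply mul_le_mul_of_nonneg_right _ (by positivity)
      exact mul_le_mul_of_nonneg_right hqt hc0
    have h3 : (q i * c) * (X ^ k / q i) = c * X ^ k := by
      field_simp
    have h4 : c * X ^ k ≤ ∑ j ∈ (Finset.Icc 1 (n t)).filter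
          (fun j : ℕ => X < Sp n q t + (j : ℝ) * q t),
          (Sp n q t + (j : ℝ) * q t) ^ k := by
      have := Finset.card_nsmul_le_sum
        ((Finset.Icc 1 (n t)).filter (fun j : ℕ => X < Sp n q t + (j : ℝ) * q t))
        (fun j => (Sp n q t + (j : ℝ) * q t) ^ k) (X ^ k) ?_
      · simpa [nsmul_eq_mul, hcdef] using this
      · intro j hj
        rw [Finset.mem_filter] at hj
        exact pow_le_pow_left₀ hX0 hj.2.le k
    linarith
  have hsum := Finset.sum_le_sum step
  rw [← Finset.sum_mul] at hsum
  have hfinal : (Sp n q (i+1) - X) * (X ^ k / q i) ≤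
      (∑ t ∈ Finset.Icc 1 i, q t *
        (((Finset.Icc 1 (n t)).filter
          (fun j : ℕ => X < Sp n q t + (j : ℝ) * q t)).card : ℝ)) * (X ^ k / q i) :=
    mul_le_mul_of_nonneg_right hbig (by positivity)
  have heq : X ^ k * (Sp n q (i + 1) - X) / q i
      = (Sp n q (i+1) - X) * (X ^ k / q i) := by ring
  rw [heq]
  exact le_trans hfinal hsum

/-- total heavy work up to the maximal heavy index is small -/
lemma heavy_work_lt (hθ : 0 < θ) {i : ℕ} (hqi : 0 ≤ q i)
    (hhc : 1 ≤ hc n m q θ i) :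
    Sp m q i + q i * (hc n m q θ i : ℝ) < Sp n q (i + 1) / θ := by
  classical
  set s := (Finset.Icc 1 (m i)).filter
      (fun j : ℕ => θ * (Sp m q i + (j : ℝ) * q i) < Sp n q (i + 1)) with hs
  have hcs : hc n m q θ i = s.card := rfl
  rw [hcs] at hhc ⊢
  have hne : s.Nonempty := Finset.card_pos.mp hhc
  have hsub : s ⊆ Finset.Icc 1 (m i) := Finset.filter_subset _ _
  have h1 : ∀ x ∈ s, 1 ≤ x := fun x hx => (Finset.mem_Icc.mp (hsub hx)).1
  have hcm : s.card ≤ s.max' hne := card_le_max' s hne h1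
  have hjm := s.max'_mem hne
  simp only [hs, Finset.mem_filter] at hjm
  have hmax : θ * (Sp m q i + (s.max' hne : ℝ) * q i) < Sp n q (i + 1) := hjm.2
  have hcm' : (s.card : ℝ) * q i ≤ (s.max' hne : ℝ) * q i :=
    mul_le_mul_of_nonneg_right (by exact_mod_cast hcm) hqi
  rw [lt_div_iff₀ hθ]
  nlinarith [mul_le_mul_of_nonneg_left hcm' hθ.le]

/-- main charging bound: total heavy contribution is a small fraction of N -/
lemma C_le (hq : ∀ i ∈ Finset.Icc 1 P, 0 < q i)
    (hmono : ∀ i ∈ Finset.Icc 1 P, ∀ j ∈ Finset.Icc 1 P, i < j → q i < q j)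
    (hθ : 0 < θ) :
    ∑ i ∈ Finset.Icc 1 P, (hc n m q θ i : ℝ) * Sp n q (i + 1) ^ k
      ≤ (2 ^ (k + 2) / θ) *
          ∑ t ∈ Finset.Icc 1 P, ∑ j ∈ Finset.Icc 1 (n t),
            (Sp n q t + (j : ℝ) * q t) ^ k := by
  classical
  -- restrict to heavy indices
  have hH : ∑ i ∈ (Finset.Icc 1 P).filter (fun i => 1 ≤ hc n m q θ i), (hc n m q θ i : ℝ) * Sp n q (i + 1) ^ k
      = ∑ i ∈ Finset.Icc 1 P, (hc n m q θ i : ℝ) * Sp n q (i + 1) ^ k := by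
    apply Finset.sum_filter_of_ne
    intro i _ hne
    by_contra hcon
    push_neg at hcon
    have h0 : hc n m q θ i = 0 := by omega
    rw [h0] at hne
    simp at hne
  rw [← hH]
  -- per-heavy-index bound
  have key2 : ∀ i ∈ (Finset.Icc 1 P).filter (fun i => 1 ≤ hc n m q θ i),
      (hc n m q θ i : ℝ) * Sp n q (i + 1) ^ k ≤
      ∑ t ∈ Finset.Icc 1 P, ∑ j ∈ Finset.Icc 1 (n t), (if t ≤ i ∧ Sp n q (i + 1) / 2 < (Sp n q t + (j : ℝ) * q t) then (2 ^ (k + 1) * (q i * (hc n m q θ i : ℝ) / Sp n q (i + 1))) * (Sp n q t + (j : ℝ) * q t) ^ k else 0) := by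
    intro i hi
    rw [Finset.mem_filter] at hi
    obtain ⟨hiP, hhc⟩ := hi
    have hiP' := Finset.mem_Icc.mp hiP
    have hqi : 0 < q i := hq i hiP
    have hT0 : 0 ≤ Sp m q i := Sp_nonneg hq (by omega)
    have hhw := heavy_work_lt (n := n) hθ hqi.le hhc
    have hhc1 : (1:ℝ) ≤ (hc n m q θ i : ℝ) := by exact_mod_cast hhc
    have hSpos : 0 < Sp n q (i + 1) := by
      have h1 : 0 < Sp n q (i + 1) / θ := lt_of_le_of_lt (by nlinarith) hhw
      rcases div_pos_iff.mp h1 with ⟨h2, _⟩ | ⟨_, h3⟩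
      · exact h2
      · linarith
    have hslice := slice_ge (k := k) (n := n) hq hmono hiP
      (X := Sp n q (i + 1) / 2) (by positivity) (by linarith)
    have hIccP : (Finset.Icc 1 P).filter (fun t => t ≤ i) = Finset.Icc 1 i := by
      ext x
      simp only [Finset.mem_filter, Finset.mem_Icc]
      omega
    have hgrid : ∑ t ∈ Finset.Icc 1 P, ∑ j ∈ Finset.Icc 1 (n t), (if t ≤ i ∧ Sp n q (i + 1) / 2 < (Sp n q t + (j : ℝ) * q t) then (2 ^ (k + 1) * (q i * (hc n m q θ i : ℝ) / Sp n q (i + 1))) * (Sp n q t + (j : ℝ) * q t) ^ k else 0)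
        = (2 ^ (k + 1) * (q i * (hc n m q θ i : ℝ) / Sp n q (i + 1))) * ∑ t ∈ Finset.Icc 1 i,
            ∑ j ∈ (Finset.Icc 1 (n t)).filter
              (fun j : ℕ => Sp n q (i + 1) / 2 < (Sp n q t + (j : ℝ) * q t)),
              (Sp n q t + (j : ℝ) * q t) ^ k := by
      rw [Finset.mul_sum, ← hIccP, Finset.sum_filter]
      apply Finset.sum_congr rfl
      intro t _
      by_cases h : t ≤ i
      · simp only [h, true_and, if_true]
        rw [Finset.mul_sum, Finset.sum_filter]
      · simp only [h, false_and, if_false]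
        simp
    rw [hgrid]
    have heq : (Sp n q (i + 1) / 2) ^ k * (Sp n q (i + 1) - Sp n q (i + 1) / 2) / q i
        = Sp n q (i + 1) ^ (k + 1) / (2 ^ (k + 1) * q i) := by
      rw [div_pow]
      field_simp
      ring
    rw [heq] at hslice
    have hcoef : (0:ℝ) ≤ (2 ^ (k + 1) * (q i * (hc n m q θ i : ℝ) / Sp n q (i + 1))) := by positivity
    calc (hc n m q θ i : ℝ) * Sp n q (i + 1) ^ k
        = (2 ^ (k + 1) * (q i * (hc n m q θ i : ℝ) / Sp n q (i + 1))) * (Sp n q (i + 1) ^ (k + 1) / (2 ^ (k + 1) * q i)) := by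
          field_simp
          ring
      _ ≤ (2 ^ (k + 1) * (q i * (hc n m q θ i : ℝ) / Sp n q (i + 1))) * (∑ t ∈ Finset.Icc 1 i,
            ∑ j ∈ (Finset.Icc 1 (n t)).filter
              (fun j : ℕ => Sp n q (i + 1) / 2 < (Sp n q t + (j : ℝ) * q t)),
              (Sp n q t + (j : ℝ) * q t) ^ k) := mul_le_mul_of_nonneg_left hslice hcoef
  -- per-atom coefficient bound
  have percoef : ∀ t ∈ Finset.Icc 1 P, ∀ j ∈ Finset.Icc 1 (n t),
      ∑ i ∈ (Finset.Icc 1 P).filter (fun i => 1 ≤ hc n m q θ i), (if t ≤ i ∧ Sp n q (i + 1) / 2 < (Sp n q t + (j : ℝ) * q t) then (2 ^ (k + 1) * (q i * (hc n m q θ i : ℝ) / Sp n q (i + 1))) * (Sp n q t + (j : ℝ) * q t) ^ k else 0) ≤ (2 ^ (k + 2) / θ) * (Sp n q t + (j : ℝ) * q t) ^ k := by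
    intro t ht j hj
    have ht' := Finset.mem_Icc.mp ht
    have hj' := Finset.mem_Icc.mp hj
    have hqt : 0 < q t := hq t ht
    have ha : 0 < (Sp n q t + (j : ℝ) * q t) := by
      have h0 : 0 ≤ Sp n q t := Sp_nonneg hq (by omega)
      have h1 : (1:ℝ) ≤ (j:ℝ) := by exact_mod_cast hj'.1
      nlinarith
    rw [← Finset.sum_filter]
    set E := ((Finset.Icc 1 P).filter (fun i => 1 ≤ hc n m q θ i)).filter (fun i => t ≤ i ∧ Sp n q (i + 1) / 2 < (Sp n q t + (j : ℝ) * q t)) with hE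
    have hEfacts : ∀ i ∈ E,
        (i ∈ Finset.Icc 1 P ∧ 1 ≤ hc n m q θ i) ∧ (t ≤ i ∧ Sp n q (i + 1) / 2 < (Sp n q t + (j : ℝ) * q t)) := by
      intro i hi
      simp only [hE, Finset.mem_filter] at hi
      tauto
    have hsumE : ∑ i ∈ E, q i * (hc n m q θ i : ℝ) / Sp n q (i + 1) ≤ 2 / θ := by
      rcases E.eq_empty_or_nonempty with he | hne
      · rw [he, Finset.sum_empty]
        positivity
      · have hi0E := E.max'_mem hne
        obtain ⟨⟨hi0P, hi0hc⟩, hi0t, hi0X⟩ := hEfacts _ hi0E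
        have hi0P' := Finset.mem_Icc.mp hi0P
        have hq0 : 0 < q (E.max' hne) := hq _ hi0P
        have hwork : ∑ i ∈ E, q i * (hc n m q θ i : ℝ)
            ≤ Sp m q (E.max' hne) + q (E.max' hne) * (hc n m q θ (E.max' hne) : ℝ) := by
          rw [← Finset.add_sum_erase _ _ hi0E]
          have h1 : ∑ i ∈ E.erase (E.max' hne), q i * (hc n m q θ i : ℝ)
              ≤ ∑ i ∈ E.erase (E.max' hne), (m i : ℝ) * q i := by
            apply Finset.sum_le_sum
            intro i hi
            obtain ⟨⟨hiP, _⟩, _, _⟩ := hEfacts _ (Finset.mem_of_mem_erase hi)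
            have hqi : 0 < q i := hq i hiP
            have hm : hc n m q θ i ≤ m i := by
              have h2 := Finset.card_filter_le (Finset.Icc 1 (m i))
                (fun j : ℕ => θ * (Sp m q i + (j : ℝ) * q i) < Sp n q (i + 1))
              simpa [hc] using h2
            have hm' : (hc n m q θ i : ℝ) ≤ (m i : ℝ) := by exact_mod_cast hm
            nlinarith
          have h2 : ∑ i ∈ E.erase (E.max' hne), (m i : ℝ) * q i
              ≤ Sp m q (E.max' hne) := by
            apply Finset.sum_le_sum_of_subset_of_nonneg
            · intro x hx
              have hxne := Finset.ne_of_mem_erase hx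
              obtain ⟨⟨hxP, _⟩, _, _⟩ := hEfacts _ (Finset.mem_of_mem_erase hx)
              have hxP' := Finset.mem_Icc.mp hxP
              have hxle : x ≤ E.max' hne := Finset.le_max' E x (Finset.mem_of_mem_erase hx)
              exact Finset.mem_Ico.mpr ⟨hxP'.1, by omega⟩
            · intro x hx _
              rw [Finset.mem_Ico] at hx
              have : 0 < q x := hq x (Finset.mem_Icc.mpr ⟨hx.1, by omega⟩)
              positivity
          linarith
        have hhw := heavy_work_lt (n := n) hθ hq0.le hi0hc
        have h5 : (Sp m q (E.max' hne) + q (E.max' hne) * (hc n m q θ (E.max' hne) : ℝ)) * θ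
            < Sp n q (E.max' hne + 1) := (lt_div_iff₀ hθ).mp hhw
        have hper : ∀ i ∈ E, q i * (hc n m q θ i : ℝ) / Sp n q (i + 1) ≤ q i * (hc n m q θ i : ℝ) / (Sp n q t + (j : ℝ) * q t) := by
          intro i hi
          obtain ⟨⟨hiP, hihc⟩, hit, hiX⟩ := hEfacts _ hi
          have hiP' := Finset.mem_Icc.mp hiP
          have hqi : 0 < q i := hq i hiP
          have haS : (Sp n q t + (j : ℝ) * q t) ≤ Sp n q (i + 1) := by
            have h1 : (Sp n q t + (j : ℝ) * q t) ≤ Sp n q (t + 1) := by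
              rw [Sp, Sp, Finset.sum_Ico_succ_top (show 1 ≤ t by omega)]
              have hjn : (j:ℝ) ≤ (n t : ℝ) := by exact_mod_cast hj'.2
              nlinarith
            have h2 : Sp n q (t + 1) ≤ Sp n q (i + 1) := Sp_mono hq (by omega) (by omega)
            linarith
          have hnum : (0:ℝ) ≤ q i * (hc n m q θ i : ℝ) := by positivity
          exact div_le_div_of_nonneg_left hnum ha haS
        have hsum1 : ∑ i ∈ E, q i * (hc n m q θ i : ℝ) / Sp n q (i + 1)
            ≤ (∑ i ∈ E, q i * (hc n m q θ i : ℝ)) / (Sp n q t + (j : ℝ) * q t) := by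
          rw [Finset.sum_div]
          exact Finset.sum_le_sum hper
        have hmul : (∑ i ∈ E, q i * (hc n m q θ i : ℝ)) * θ < 2 * (Sp n q t + (j : ℝ) * q t) := by
          have h6 : (∑ i ∈ E, q i * (hc n m q θ i : ℝ)) * θ
              ≤ (Sp m q (E.max' hne) + q (E.max' hne) * (hc n m q θ (E.max' hne) : ℝ)) * θ :=
            mul_le_mul_of_nonneg_right hwork hθ.le
          linarith
        have hfin : (∑ i ∈ E, q i * (hc n m q θ i : ℝ)) / (Sp n q t + (j : ℝ) * q t) ≤ 2 / θ := by
          rw [div_le_div_iff₀ ha hθ]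
          linarith
        linarith
    calc ∑ i ∈ E, (2 ^ (k + 1) * (q i * (hc n m q θ i : ℝ) / Sp n q (i + 1))) * (Sp n q t + (j : ℝ) * q t) ^ k
        = (∑ i ∈ E, q i * (hc n m q θ i : ℝ) / Sp n q (i + 1)) * (2 ^ (k + 1) * (Sp n q t + (j : ℝ) * q t) ^ k) := by
          rw [Finset.sum_mul]
          apply Finset.sum_congr rfl
          intro i _
          ring
      _ ≤ (2 / θ) * (2 ^ (k + 1) * (Sp n q t + (j : ℝ) * q t) ^ k) := by
          apply mul_le_mul_of_nonneg_right hsumE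
          positivity
      _ = (2 ^ (k + 2) / θ) * (Sp n q t + (j : ℝ) * q t) ^ k := by
          rw [pow_succ]
          ring
  calc ∑ i ∈ (Finset.Icc 1 P).filter (fun i => 1 ≤ hc n m q θ i), (hc n m q θ i : ℝ) * Sp n q (i + 1) ^ k
      ≤ ∑ i ∈ (Finset.Icc 1 P).filter (fun i => 1 ≤ hc n m q θ i), ∑ t ∈ Finset.Icc 1 P, ∑ j ∈ Finset.Icc 1 (n t), (if t ≤ i ∧ Sp n q (i + 1) / 2 < (Sp n q t + (j : ℝ) * q t) then (2 ^ (k + 1) * (q i * (hc n m q θ i : ℝ) / Sp n q (i + 1))) * (Sp n q t + (j : ℝ) * q t) ^ k else 0) :=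
        Finset.sum_le_sum key2
    _ = ∑ t ∈ Finset.Icc 1 P, ∑ j ∈ Finset.Icc 1 (n t), ∑ i ∈ (Finset.Icc 1 P).filter (fun i => 1 ≤ hc n m q θ i), (if t ≤ i ∧ Sp n q (i + 1) / 2 < (Sp n q t + (j : ℝ) * q t) then (2 ^ (k + 1) * (q i * (hc n m q θ i : ℝ) / Sp n q (i + 1))) * (Sp n q t + (j : ℝ) * q t) ^ k else 0) := by
        rw [Finset.sum_comm]
        apply Finset.sum_congr rfl
        intro t _
        rw [Finset.sum_comm]
    _ ≤ ∑ t ∈ Finset.Icc 1 P, ∑ j ∈ Finset.Icc 1 (n t), (2 ^ (k + 2) / θ) * (Sp n q t + (j : ℝ) * q t) ^ k := by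
        apply Finset.sum_le_sum
        intro t ht
        apply Finset.sum_le_sum
        intro j hj
        exact percoef t ht j hj
    _ = (2 ^ (k + 2) / θ) * ∑ t ∈ Finset.Icc 1 P, ∑ j ∈ Finset.Icc 1 (n t), (Sp n q t + (j : ℝ) * q t) ^ k := by
        rw [Finset.mul_sum]
        apply Finset.sum_congr rfl
        intro t _
        rw [Finset.mul_sum]

end Main

end Stmt16

theorem stmt_16 (k : ℕ) (hk : 1 ≤ k) :
    ∃ lam : ℝ, ∀ (P : ℕ), 1 ≤ P → ∀ (n m : ℕ → ℕ) (q : ℕ → ℝ),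
      (∀ i ∈ Finset.Icc 1 P, 0 < q i) →
      (∀ i ∈ Finset.Icc 1 P, ∀ j ∈ Finset.Icc 1 P, i < j → q i < q j) →
      ∑ i ∈ Finset.Icc 1 P, ∑ j ∈ Finset.Icc 1 (m i),
          ((∑ t ∈ Finset.Icc 1 i, (n t : ℝ) * q t) + (j : ℝ) * q i) ^ k
        ≤ ((k + 1 : ℝ) / (k + 2)) *
            ∑ i ∈ Finset.Icc 1 P, ∑ j ∈ Finset.Icc 1 (n i),
              ((∑ t ∈ Finset.Ico 1 i, (n t : ℝ) * q t) + (j : ℝ) * q i) ^ k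
          + lam *
            ∑ i ∈ Finset.Icc 1 P, ∑ j ∈ Finset.Icc 1 (m i),
              ((∑ t ∈ Finset.Ico 1 i, (m t : ℝ) * q t) + (j : ℝ) * q i) ^ k := by
  classical
  refine ⟨(1 + (2:ℝ)^(k+5))^k, ?_⟩
  intro P hP n m q hq hmono
  have hθ : (0:ℝ) < (2:ℝ)^(k+5) := by positivity
  -- numeric fact: (1 + 1/θ)^k ≤ 3
  have hek : ((1:ℝ) + 1/(2:ℝ)^(k+5))^k ≤ 3 := by
    have h1 : (1:ℝ) + 1/(2:ℝ)^(k+5) ≤ Real.exp (1/(2:ℝ)^(k+5)) := by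
      have := Real.add_one_le_exp (1/(2:ℝ)^(k+5))
      linarith
    have h2 : ((1:ℝ) + 1/(2:ℝ)^(k+5))^k ≤ Real.exp (1/(2:ℝ)^(k+5))^k :=
      pow_le_pow_left₀ (by positivity) h1 k
    have h3 : Real.exp (1/(2:ℝ)^(k+5))^k = Real.exp ((k:ℝ) * (1/(2:ℝ)^(k+5))) :=
      (Real.exp_nat_mul _ k).symm
    have h4 : (k:ℝ) * (1/(2:ℝ)^(k+5)) ≤ 1 := by
      rw [mul_one_div, div_le_one hθ]
      have h5 : k < 2^(k+5) :=
        lt_of_lt_of_le (Nat.lt_two_pow_self (n := k)) (Nat.pow_le_pow_right (by norm_num) (by omega))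
      calc (k:ℝ) ≤ ((2^(k+5) : ℕ) : ℝ) := by exact_mod_cast h5.le
        _ = (2:ℝ)^(k+5) := by push_cast; ring
    have h6 : Real.exp ((k:ℝ) * (1/(2:ℝ)^(k+5))) ≤ Real.exp 1 := Real.exp_le_exp.mpr h4
    have h7 : Real.exp 1 ≤ 3 := by
      have := Real.exp_one_lt_d9
      linarith
    calc ((1:ℝ) + 1/(2:ℝ)^(k+5))^k ≤ Real.exp (1/(2:ℝ)^(k+5))^k := h2
      _ = Real.exp ((k:ℝ) * (1/(2:ℝ)^(k+5))) := h3
      _ ≤ Real.exp 1 := h6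
      _ ≤ 3 := h7
  have hratio : ((2:ℝ)^(k+2))/((2:ℝ)^(k+5)) = 1/8 := by
    have h8 : (2:ℝ)^(k+5) = 2^(k+2) * 8 := by
      rw [show k+5 = (k+2)+3 by omega, pow_add]
      norm_num
    rw [h8]
    have h9 : ((2:ℝ))^(k+2) ≠ 0 := by positivity
    field_simp
  -- pointwise heavy/light split
  have pointwise : ∀ i ∈ Finset.Icc 1 P, ∀ j ∈ Finset.Icc 1 (m i),
      (Stmt16.Sp n q (i+1) + (j : ℝ) * q i)^k ≤
        (if (2:ℝ)^(k+5) * (Stmt16.Sp m q i + (j : ℝ) * q i) < Stmt16.Sp n q (i + 1) then (1 + 1/(2:ℝ)^(k+5))^k * Stmt16.Sp n q (i+1)^k else 0) + (1 + (2:ℝ)^(k+5))^k * (Stmt16.Sp m q i + (j:ℝ) * q i)^k := by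
    intro i hi j hj
    have hi' := Finset.mem_Icc.mp hi
    have hj' := Finset.mem_Icc.mp hj
    have hqi : 0 < q i := hq i hi
    have hT0 : 0 ≤ Stmt16.Sp m q i := Stmt16.Sp_nonneg hq (by omega)
    have hS0 : 0 ≤ Stmt16.Sp n q (i+1) := Stmt16.Sp_nonneg hq (by omega)
    have hj1 : (1:ℝ) ≤ (j:ℝ) := by exact_mod_cast hj'.1
    have hjq : 0 < (j:ℝ) * q i := by nlinarith
    have hB : 0 < (Stmt16.Sp m q i + (j:ℝ) * q i) := by linarith
    by_cases h : (2:ℝ)^(k+5) * (Stmt16.Sp m q i + (j : ℝ) * q i) < Stmt16.Sp n q (i + 1)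
    · rw [if_pos h]
      have hBle : (Stmt16.Sp m q i + (j:ℝ) * q i) ≤ Stmt16.Sp n q (i+1) / (2:ℝ)^(k+5) := by
        rw [le_div_iff₀ hθ]
        nlinarith
      have hstep : Stmt16.Sp n q (i+1) + (j:ℝ) * q i ≤ (1 + 1/(2:ℝ)^(k+5)) * Stmt16.Sp n q (i+1) := by
        have hx : (j:ℝ) * q i ≤ (Stmt16.Sp m q i + (j:ℝ) * q i) := by linarith
        have h2 : (1 + 1/(2:ℝ)^(k+5)) * Stmt16.Sp n q (i+1)
            = Stmt16.Sp n q (i+1) + Stmt16.Sp n q (i+1)/(2:ℝ)^(k+5) := by ring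
        linarith
      have h3 : (Stmt16.Sp n q (i+1) + (j:ℝ) * q i)^k
          ≤ ((1 + 1/(2:ℝ)^(k+5)) * Stmt16.Sp n q (i+1))^k :=
        pow_le_pow_left₀ (by linarith) hstep k
      rw [mul_pow] at h3
      have h4 : (0:ℝ) ≤ (1 + (2:ℝ)^(k+5))^k * (Stmt16.Sp m q i + (j:ℝ) * q i)^k := by positivity
      linarith
    · rw [if_neg h]
      push_neg at h
      have hstep : Stmt16.Sp n q (i+1) + (j:ℝ) * q i ≤ (1 + (2:ℝ)^(k+5)) * (Stmt16.Sp m q i + (j:ℝ) * q i) := by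
        have hx : (j:ℝ) * q i ≤ (Stmt16.Sp m q i + (j:ℝ) * q i) := by linarith
        nlinarith
      have h3 : (Stmt16.Sp n q (i+1) + (j:ℝ) * q i)^k ≤ ((1 + (2:ℝ)^(k+5)) * (Stmt16.Sp m q i + (j:ℝ) * q i))^k :=
        pow_le_pow_left₀ (by linarith) hstep k
      rw [mul_pow] at h3
      linarith
  -- the heavy indicator part sums to (1+1/θ)^k * C
  have hfirst : ∑ i ∈ Finset.Icc 1 P, ∑ j ∈ Finset.Icc 1 (m i), (if (2:ℝ)^(k+5) * (Stmt16.Sp m q i + (j : ℝ) * q i) < Stmt16.Sp n q (i + 1) then (1 + 1/(2:ℝ)^(k+5))^k * Stmt16.Sp n q (i+1)^k else 0)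
      = (1 + 1/(2:ℝ)^(k+5))^k * (∑ i ∈ Finset.Icc 1 P, (Stmt16.hc n m q ((2:ℝ)^(k+5)) i : ℝ) * Stmt16.Sp n q (i+1) ^ k) := by
    rw [Finset.mul_sum]
    apply Finset.sum_congr rfl
    intro i _
    rw [← Finset.sum_filter, Finset.sum_const]
    simp only [Stmt16.hc]
    rw [nsmul_eq_mul]
    ring
  have hsecond : ∑ i ∈ Finset.Icc 1 P, ∑ j ∈ Finset.Icc 1 (m i), (1 + (2:ℝ)^(k+5))^k * (Stmt16.Sp m q i + (j:ℝ) * q i)^k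
      = (1 + (2:ℝ)^(k+5))^k * (∑ i ∈ Finset.Icc 1 P, ∑ j ∈ Finset.Icc 1 (m i), (Stmt16.Sp m q i + (j : ℝ) * q i) ^ k) := by
    rw [Finset.mul_sum]
    apply Finset.sum_congr rfl
    intro i _
    rw [Finset.mul_sum]
  have hC := Stmt16.C_le (k := k) (n := n) (m := m) hq hmono hθ
  have hCnn : (0:ℝ) ≤ ∑ i ∈ Finset.Icc 1 P, (Stmt16.hc n m q ((2:ℝ)^(k+5)) i : ℝ) * Stmt16.Sp n q (i+1) ^ k := by
    apply Finset.sum_nonneg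
    intro i hi
    have hqi : 0 < q i := hq i hi
    have hi' := Finset.mem_Icc.mp hi
    have hS0 : 0 ≤ Stmt16.Sp n q (i+1) := Stmt16.Sp_nonneg hq (by omega)
    positivity
  have hNnn : (0:ℝ) ≤ ∑ t ∈ Finset.Icc 1 P, ∑ j ∈ Finset.Icc 1 (n t), (Stmt16.Sp n q t + (j : ℝ) * q t) ^ k := by
    apply Finset.sum_nonneg
    intro t ht
    apply Finset.sum_nonneg
    intro j hj
    have ht' := Finset.mem_Icc.mp ht
    have hqt : 0 < q t := hq t ht
    have hS0 : 0 ≤ Stmt16.Sp n q t := Stmt16.Sp_nonneg hq (by omega)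
    have hj0 : (0:ℝ) ≤ (j:ℝ) := by positivity
    have : (0:ℝ) ≤ Stmt16.Sp n q t + (j:ℝ) * q t := by nlinarith
    positivity
  have hfrac : (3:ℝ)/8 ≤ ((k:ℝ) + 1) / ((k:ℝ) + 2) := by
    rw [div_le_div_iff₀ (by norm_num) (by positivity)]
    have : (0:ℝ) ≤ (k:ℝ) := Nat.cast_nonneg k
    nlinarith
  have main : ∑ i ∈ Finset.Icc 1 P, ∑ j ∈ Finset.Icc 1 (m i), (Stmt16.Sp n q (i+1) + (j : ℝ) * q i) ^ k ≤ (((k:ℝ) + 1) / ((k:ℝ) + 2)) * (∑ t ∈ Finset.Icc 1 P, ∑ j ∈ Finset.Icc 1 (n t), (Stmt16.Sp n q t + (j : ℝ) * q t) ^ k) + (1 + (2:ℝ)^(k+5))^k * (∑ i ∈ Finset.Icc 1 P, ∑ j ∈ Finset.Icc 1 (m i), (Stmt16.Sp m q i + (j : ℝ) * q i) ^ k) := by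
    have step1 : ∑ i ∈ Finset.Icc 1 P, ∑ j ∈ Finset.Icc 1 (m i), (Stmt16.Sp n q (i+1) + (j : ℝ) * q i) ^ k ≤
        (∑ i ∈ Finset.Icc 1 P, ∑ j ∈ Finset.Icc 1 (m i), (if (2:ℝ)^(k+5) * (Stmt16.Sp m q i + (j : ℝ) * q i) < Stmt16.Sp n q (i + 1) then (1 + 1/(2:ℝ)^(k+5))^k * Stmt16.Sp n q (i+1)^k else 0))
        + ∑ i ∈ Finset.Icc 1 P, ∑ j ∈ Finset.Icc 1 (m i), (1 + (2:ℝ)^(k+5))^k * (Stmt16.Sp m q i + (j:ℝ) * q i)^k := by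
      rw [← Finset.sum_add_distrib]
      apply Finset.sum_le_sum
      intro i hi
      rw [← Finset.sum_add_distrib]
      apply Finset.sum_le_sum
      intro j hj
      exact pointwise i hi j hj
    rw [hfirst, hsecond] at step1
    have step2 : ((1:ℝ) + 1/(2:ℝ)^(k+5))^k * (∑ i ∈ Finset.Icc 1 P, (Stmt16.hc n m q ((2:ℝ)^(k+5)) i : ℝ) * Stmt16.Sp n q (i+1) ^ k) ≤ 3 * (∑ i ∈ Finset.Icc 1 P, (Stmt16.hc n m q ((2:ℝ)^(k+5)) i : ℝ) * Stmt16.Sp n q (i+1) ^ k) :=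
      mul_le_mul_of_nonneg_right hek hCnn
    have step3 : (3:ℝ) * (∑ i ∈ Finset.Icc 1 P, (Stmt16.hc n m q ((2:ℝ)^(k+5)) i : ℝ) * Stmt16.Sp n q (i+1) ^ k) ≤ 3 * ((2^(k+2)/((2:ℝ)^(k+5))) * (∑ t ∈ Finset.Icc 1 P, ∑ j ∈ Finset.Icc 1 (n t), (Stmt16.Sp n q t + (j : ℝ) * q t) ^ k))  := by
      have := hC
      nlinarith
    have step4 : (3:ℝ) * ((2^(k+2)/((2:ℝ)^(k+5))) * (∑ t ∈ Finset.Icc 1 P, ∑ j ∈ Finset.Icc 1 (n t), (Stmt16.Sp n q t + (j : ℝ) * q t) ^ k)) = (3/8) * (∑ t ∈ Finset.Icc 1 P, ∑ j ∈ Finset.Icc 1 (n t), (Stmt16.Sp n q t + (j : ℝ) * q t) ^ k) := by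
      rw [hratio]
      ring
    have step5 : ((3:ℝ)/8) * (∑ t ∈ Finset.Icc 1 P, ∑ j ∈ Finset.Icc 1 (n t), (Stmt16.Sp n q t + (j : ℝ) * q t) ^ k) ≤ (((k:ℝ) + 1) / ((k:ℝ) + 2)) * (∑ t ∈ Finset.Icc 1 P, ∑ j ∈ Finset.Icc 1 (n t), (Stmt16.Sp n q t + (j : ℝ) * q t) ^ k) :=
      mul_le_mul_of_nonneg_right hfrac hNnn
    linarith
  have hSfun : ∀ i : ℕ, Stmt16.Sp n q (i+1) = ∑ t ∈ Finset.Icc 1 i, (n t : ℝ) * q t := by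
    intro i
    rw [Stmt16.Sp, Finset.Ico_add_one_right_eq_Icc]
  simp only [hSfun, Stmt16.Sp, Finset.Ico_add_one_right_eq_Icc] at main
  push_cast at main ⊢
  convert main using 2
end

section
/- Let (a_j)_{j=1}^P and (b_j)_{j=1}^P be nonnegative reals with partial sums A_i = ∑_{j≤i} a_j and B_i = ∑_{j≤i} b_j. If for a positive integer k and constants μ, λ ≥ 0 the pointwise inequality B_i·(A_i + B_i)^k ≤ (μ/(k+1))·A_i^(k+1) + (λ/(k+1))·B_i^(k+1) holds for every i, then ∑_{j=1}^{i} b_j·(A_j + b_j)^k ≤ μ·∑_{j=1}^{i} a_j·A_j^k + λ·∑_{j=1}^{i} b_j·B_j^k for every 1 ≤ i ≤ P. -/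
lemma aux_pow_sub (x y : ℝ) (hy : 0 ≤ y) (hxy : y ≤ x) :
    ∀ n : ℕ, x ^ (n + 1) - y ^ (n + 1) ≤ ((n : ℝ) + 1) * (x - y) * x ^ n := by
  intro n
  induction n with
  | zero => simp
  | succ n ih =>
    have hx : 0 ≤ x := hy.trans hxy
    have h1 := mul_le_mul_of_nonneg_left ih hx
    have h2 : y ^ (n + 1) ≤ x ^ (n + 1) := pow_le_pow_left₀ hy hxy (n + 1)
    have h3 : (x - y) * y ^ (n + 1) ≤ (x - y) * x ^ (n + 1) :=
      mul_le_mul_of_nonneg_left h2 (by linarith)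
    push_cast
    rw [pow_succ x (n + 1), pow_succ y (n + 1)]
    rw [pow_succ x n, pow_succ y n] at h1 h3 ⊢
    nlinarith [h1, h3]

lemma aux_tel (k : ℕ) (c : ℕ → ℝ) :
    ∀ i : ℕ, (∀ j ∈ Finset.Icc 1 i, 0 ≤ c j) →
      (∑ j ∈ Finset.Icc 1 i, c j) ^ (k + 1)
        ≤ ((k : ℝ) + 1) * ∑ j ∈ Finset.Icc 1 i, c j * (∑ t ∈ Finset.Icc 1 j, c t) ^ k := by
  intro i
  induction i with
  | zero => simp
  | succ i ih =>
    intro hc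
    have h1 : (1 : ℕ) ≤ i + 1 := Nat.succ_le_succ (Nat.zero_le i)
    rw [Finset.sum_Icc_succ_top h1, Finset.sum_Icc_succ_top h1]
    have hc' : ∀ j ∈ Finset.Icc 1 i, 0 ≤ c j := fun j hj => hc j
      (Finset.mem_Icc.mpr ⟨(Finset.mem_Icc.mp hj).1, (Finset.mem_Icc.mp hj).2.trans (Nat.le_succ i)⟩)
    have hci : 0 ≤ c (i + 1) := hc (i + 1) (Finset.mem_Icc.mpr ⟨h1, le_refl _⟩)
    set S := ∑ j ∈ Finset.Icc 1 i, c j with hS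
    have hSnn : 0 ≤ S := Finset.sum_nonneg hc'
    have key := aux_pow_sub (S + c (i + 1)) S hSnn (by linarith) k
    have hih := ih hc'
    rw [show ∑ t ∈ Finset.Icc 1 (i + 1), c t = S + c (i + 1) from
      Finset.sum_Icc_succ_top h1 c]
    nlinarith [hih, key]

theorem stmt_17 (P : ℕ) (hP : 1 ≤ P) (a b : ℕ → ℝ)
    (ha : ∀ j ∈ Finset.Icc 1 P, 0 ≤ a j) (hb : ∀ j ∈ Finset.Icc 1 P, 0 ≤ b j)
    (k : ℕ) (hk : 1 ≤ k) (μ lam : ℝ) (hμ : 0 ≤ μ) (hlam : 0 ≤ lam)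
    (hpoint : ∀ i ∈ Finset.Icc 1 P,
      (∑ j ∈ Finset.Icc 1 i, b j) *
          ((∑ j ∈ Finset.Icc 1 i, a j) + (∑ j ∈ Finset.Icc 1 i, b j)) ^ k
        ≤ (μ / (k + 1)) * (∑ j ∈ Finset.Icc 1 i, a j) ^ (k + 1)
          + (lam / (k + 1)) * (∑ j ∈ Finset.Icc 1 i, b j) ^ (k + 1)) :
    ∀ i ∈ Finset.Icc 1 P,
      ∑ j ∈ Finset.Icc 1 i, b j * ((∑ t ∈ Finset.Icc 1 j, a t) + b j) ^ k
        ≤ μ * ∑ j ∈ Finset.Icc 1 i, a j * (∑ t ∈ Finset.Icc 1 j, a t) ^ k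
          + lam * ∑ j ∈ Finset.Icc 1 i, b j * (∑ t ∈ Finset.Icc 1 j, b t) ^ k := by
  intro i hi
  obtain ⟨hi1, hiP⟩ := Finset.mem_Icc.mp hi
  have hsub : Finset.Icc 1 i ⊆ Finset.Icc 1 P := Finset.Icc_subset_Icc_right hiP
  have ha' : ∀ j ∈ Finset.Icc 1 i, 0 ≤ a j := fun j hj => ha j (hsub hj)
  have hb' : ∀ j ∈ Finset.Icc 1 i, 0 ≤ b j := fun j hj => hb j (hsub hj)
  set Ai := ∑ j ∈ Finset.Icc 1 i, a j with hAi
  set Bi := ∑ j ∈ Finset.Icc 1 i, b j with hBi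
  have hAnn : 0 ≤ Ai := Finset.sum_nonneg ha'
  have hBnn : 0 ≤ Bi := Finset.sum_nonneg hb'
  -- Step 1: LHS ≤ Bi * (Ai + Bi)^k
  have step1 : ∑ j ∈ Finset.Icc 1 i, b j * ((∑ t ∈ Finset.Icc 1 j, a t) + b j) ^ k
      ≤ Bi * (Ai + Bi) ^ k := by
    rw [hBi, Finset.sum_mul]
    apply Finset.sum_le_sum
    intro j hj
    obtain ⟨hj1, hji⟩ := Finset.mem_Icc.mp hj
    have hAj : (∑ t ∈ Finset.Icc 1 j, a t) ≤ Ai := by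
      apply Finset.sum_le_sum_of_subset_of_nonneg (Finset.Icc_subset_Icc_right hji)
      intro t ht _
      exact ha' t ht
    have hbj : b j ≤ Bi := Finset.single_le_sum hb' hj
    have hAjnn : 0 ≤ (∑ t ∈ Finset.Icc 1 j, a t) :=
      Finset.sum_nonneg fun t ht => ha' t (Finset.Icc_subset_Icc_right hji ht)
    have hbjnn : 0 ≤ b j := hb' j hj
    have : ((∑ t ∈ Finset.Icc 1 j, a t) + b j) ^ k ≤ (Ai + Bi) ^ k :=
      pow_le_pow_left₀ (by linarith) (by linarith) k
    exact mul_le_mul_of_nonneg_left this hbjnn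
  -- Step 2: pointwise hypothesis
  have step2 := hpoint i hi
  -- Step 3: telescoping bounds
  have htelA := aux_tel k a i ha'
  have htelB := aux_tel k b i hb'
  have hk1 : (0 : ℝ) < (k : ℝ) + 1 := by positivity
  have hA : (μ / (k + 1)) * Ai ^ (k + 1)
      ≤ μ * ∑ j ∈ Finset.Icc 1 i, a j * (∑ t ∈ Finset.Icc 1 j, a t) ^ k := by
    rw [div_mul_eq_mul_div, div_le_iff₀ hk1]
    calc μ * Ai ^ (k + 1) ≤ μ * (((k : ℝ) + 1) * ∑ j ∈ Finset.Icc 1 i, a j * (∑ t ∈ Finset.Icc 1 j, a t) ^ k) :=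
          mul_le_mul_of_nonneg_left htelA hμ
      _ = μ * (∑ j ∈ Finset.Icc 1 i, a j * (∑ t ∈ Finset.Icc 1 j, a t) ^ k) * ((k : ℝ) + 1) := by ring
  have hB : (lam / (k + 1)) * Bi ^ (k + 1)
      ≤ lam * ∑ j ∈ Finset.Icc 1 i, b j * (∑ t ∈ Finset.Icc 1 j, b t) ^ k := by
    rw [div_mul_eq_mul_div, div_le_iff₀ hk1]
    calc lam * Bi ^ (k + 1) ≤ lam * (((k : ℝ) + 1) * ∑ j ∈ Finset.Icc 1 i, b j * (∑ t ∈ Finset.Icc 1 j, b t) ^ k) :=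
          mul_le_mul_of_nonneg_left htelB hlam
      _ = lam * (∑ j ∈ Finset.Icc 1 i, b j * (∑ t ∈ Finset.Icc 1 j, b t) ^ k) * ((k : ℝ) + 1) := by ring
  linarith
end

section
/- Let N jobs have processing times q(z)-parametrized as follows: for fixed A ≥ 0 and reals q_h ≤ q_{h+1}, define q(z) = q_h + (q_{h+1} − q_h)·z for z ∈ [0,1], and g(z) = 2(k+1)·∑_{t=1}^{n} (A + t·q(z))^k − n·(A + n·q(z))^k for a positive integer n and positive integer k. Then g is nondecreasing on [0,1]; in particular 2(k+1)·∑_{t=1}^{n} t·(A + t·q)^{k−1} > n²·(A + n·q)^{k−1} for all q > 0. -/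
-- helper: a^p - b^p ≤ p * a^(p-1) * (a-b) for 0 ≤ b ≤ a
lemma pow_diff_le (a b : ℝ) (hb : 0 ≤ b) (hba : b ≤ a) (p : ℕ) :
    a ^ p - b ^ p ≤ p * a ^ (p - 1) * (a - b) := by
  rw [← geom_sum₂_mul]
  have h1 : (∑ i ∈ Finset.range p, a ^ i * b ^ (p - 1 - i)) ≤ p * a ^ (p - 1) := by
    calc (∑ i ∈ Finset.range p, a ^ i * b ^ (p - 1 - i))
        ≤ ∑ i ∈ Finset.range p, a ^ (p - 1) := by
          apply Finset.sum_le_sum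
          intro i hi
          simp only [Finset.mem_range] at hi
          calc a ^ i * b ^ (p - 1 - i) ≤ a ^ i * a ^ (p - 1 - i) := by
                exact mul_le_mul_of_nonneg_left (pow_le_pow_left₀ hb hba _)
                  (pow_nonneg (hb.trans hba) _)
            _ = a ^ (i + (p - 1 - i)) := (pow_add a i _).symm
            _ = a ^ (p - 1) := by congr 1; omega
      _ = p * a ^ (p - 1) := by simp [Finset.sum_const, nsmul_eq_mul]
  exact mul_le_mul_of_nonneg_right h1 (sub_nonneg.2 hba)

-- (k+1) * ∑_{t=1}^n t^k ≥ n^(k+1)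
lemma sum_pow_ge (n k : ℕ) :
    (n : ℝ) ^ (k + 1) ≤ (k + 1) * ∑ t ∈ Finset.Icc 1 n, (t : ℝ) ^ k := by
  have tel : (∑ i ∈ Finset.range n, (((i : ℝ) + 1) ^ (k + 1) - (i : ℝ) ^ (k + 1)))
      = (n : ℝ) ^ (k + 1) := by
    have := Finset.sum_range_sub (fun i => (i : ℝ) ^ (k + 1)) n
    simpa using this
  rw [← tel]
  have : (∑ i ∈ Finset.range n, (((i : ℝ) + 1) ^ (k + 1) - (i : ℝ) ^ (k + 1)))
      ≤ ∑ i ∈ Finset.range n, ((k : ℝ) + 1) * ((i : ℝ) + 1) ^ k := by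
    apply Finset.sum_le_sum
    intro i _
    have := pow_diff_le ((i : ℝ) + 1) (i : ℝ) (Nat.cast_nonneg i) (by linarith) (k + 1)
    simpa using this
  refine this.trans_eq ?_
  rw [Finset.mul_sum]
  rw [show Finset.Icc 1 n = Finset.Ico 1 (n + 1) by rfl, Finset.sum_Ico_eq_sum_range]
  simp [add_comm]

lemma key_ineq (A : ℝ) (hA : 0 ≤ A) (n k : ℕ) (hn : 1 ≤ n) (hk : 1 ≤ k)
    (q : ℝ) (hq : 0 < q) :
    (n : ℝ) ^ 2 * (A + (n : ℝ) * q) ^ (k - 1)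
      < 2 * (k + 1 : ℝ) * ∑ t ∈ Finset.Icc 1 n, (t : ℝ) * (A + (t : ℝ) * q) ^ (k - 1) := by
  obtain ⟨m, rfl⟩ : ∃ m, k = m + 1 := ⟨k - 1, by omega⟩
  simp only [Nat.add_sub_cancel]
  have hnpos : (0 : ℝ) < n := by exact_mod_cast hn
  have hAnq : (0 : ℝ) < A + n * q := by nlinarith
  have hP : (0 : ℝ) < (A + (n : ℝ) * q) ^ m := pow_pos hAnq m
  have h1 : ∀ t ∈ Finset.Icc 1 n,
      (t : ℝ) ^ (m + 1) * (A + (n : ℝ) * q) ^ m ≤ (n : ℝ) ^ m * ((t : ℝ) * (A + (t : ℝ) * q) ^ m) := by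
    intro t ht
    simp only [Finset.mem_Icc] at ht
    have htn : (t : ℝ) ≤ n := by exact_mod_cast ht.2
    have ht0 : (0 : ℝ) ≤ t := Nat.cast_nonneg t
    have hin : (t : ℝ) * (A + n * q) ≤ (n : ℝ) * (A + t * q) := by nlinarith
    have hpow : ((t : ℝ) * (A + n * q)) ^ m ≤ ((n : ℝ) * (A + t * q)) ^ m :=
      pow_le_pow_left₀ (by positivity) hin m
    calc (t : ℝ) ^ (m + 1) * (A + (n : ℝ) * q) ^ m
        = (t : ℝ) * ((t : ℝ) * (A + n * q)) ^ m := by rw [mul_pow]; ring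
      _ ≤ (t : ℝ) * ((n : ℝ) * (A + t * q)) ^ m := by
          exact mul_le_mul_of_nonneg_left hpow ht0
      _ = (n : ℝ) ^ m * ((t : ℝ) * (A + (t : ℝ) * q) ^ m) := by rw [mul_pow]; ring
  have h2 : (∑ t ∈ Finset.Icc 1 n, (t : ℝ) ^ (m + 1)) * (A + (n : ℝ) * q) ^ m
      ≤ (n : ℝ) ^ m * ∑ t ∈ Finset.Icc 1 n, (t : ℝ) * (A + (t : ℝ) * q) ^ m := by
    rw [Finset.sum_mul, Finset.mul_sum]
    exact Finset.sum_le_sum h1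
  have h3 := sum_pow_ge n (m + 1)
  push_cast at h3 ⊢
  have hnm : (0 : ℝ) < (n : ℝ) ^ m := pow_pos hnpos m
  rw [← mul_lt_mul_iff_right₀ hnm]
  have hnm2 : (n : ℝ) ^ m * ((n:ℝ) ^ 2 * (A + n * q) ^ m) = (n:ℝ) ^ (m + 2) * (A + n*q) ^ m := by
    ring
  rw [hnm2]
  have h4 : (n : ℝ) ^ (m + 2) * (A + n * q) ^ m
      ≤ ((m : ℝ) + 1 + 1) * ((∑ t ∈ Finset.Icc 1 n, (t : ℝ) ^ (m + 1)) * (A + n * q) ^ m) := by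
    rw [← mul_assoc]
    exact mul_le_mul_of_nonneg_right (by linarith [h3]) hP.le
  have h5 : ((m : ℝ) + 1 + 1) * ((∑ t ∈ Finset.Icc 1 n, (t : ℝ) ^ (m + 1)) * (A + n * q) ^ m)
      ≤ ((m : ℝ) + 1 + 1) * ((n : ℝ) ^ m * ∑ t ∈ Finset.Icc 1 n, (t : ℝ) * (A + (t : ℝ) * q) ^ m) :=
    mul_le_mul_of_nonneg_left h2 (by positivity)
  have hpos : (0 : ℝ) < (n : ℝ) ^ (m + 2) * (A + n * q) ^ m := by positivity
  nlinarith [h4, h5, hpos]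

theorem stmt_18 (A : ℝ) (hA : 0 ≤ A) (qh qh1 : ℝ) (hq : 0 < qh) (hqq : qh ≤ qh1)
    (n k : ℕ) (hn : 1 ≤ n) (hk : 1 ≤ k) :
    MonotoneOn (fun z : ℝ =>
        2 * (k + 1 : ℝ) * ∑ t ∈ Finset.Icc 1 n,
            (A + (t : ℝ) * (qh + (qh1 - qh) * z)) ^ k
          - (n : ℝ) * (A + (n : ℝ) * (qh + (qh1 - qh) * z)) ^ k)
      (Set.Icc 0 1) ∧
    ∀ q : ℝ, 0 < q →
      2 * (k + 1 : ℝ) * ∑ t ∈ Finset.Icc 1 n, (t : ℝ) * (A + (t : ℝ) * q) ^ (k - 1)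
        > (n : ℝ) ^ 2 * (A + (n : ℝ) * q) ^ (k - 1) := by
  constructor
  · set F : ℝ → ℝ := fun z =>
        2 * (k + 1 : ℝ) * ∑ t ∈ Finset.Icc 1 n,
            (A + (t : ℝ) * (qh + (qh1 - qh) * z)) ^ k
          - (n : ℝ) * (A + (n : ℝ) * (qh + (qh1 - qh) * z)) ^ k with hF
    set D : ℝ → ℝ := fun x =>
        2 * (k + 1 : ℝ) * ∑ t ∈ Finset.Icc 1 n,
            ((k : ℝ) * (A + (t : ℝ) * (qh + (qh1 - qh) * x)) ^ (k - 1) * ((t : ℝ) * (qh1 - qh)))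
          - (n : ℝ) * ((k : ℝ) * (A + (n : ℝ) * (qh + (qh1 - qh) * x)) ^ (k - 1)
              * ((n : ℝ) * (qh1 - qh))) with hD
    have hd : ∀ x : ℝ, HasDerivAt F (D x) x := by
      intro x
      have hqz : HasDerivAt (fun z : ℝ => qh + (qh1 - qh) * z) (qh1 - qh) x := by
        simpa using ((hasDerivAt_id x).const_mul (qh1 - qh)).const_add qh
      have hterm : ∀ t : ℕ, HasDerivAt (fun z : ℝ => (A + (t : ℝ) * (qh + (qh1 - qh) * z)) ^ k)
          ((k : ℝ) * (A + (t : ℝ) * (qh + (qh1 - qh) * x)) ^ (k - 1) * ((t : ℝ) * (qh1 - qh))) x := by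
        intro t
        exact ((hqz.const_mul (t : ℝ)).const_add A).pow k
      have hsum : HasDerivAt (fun z : ℝ => ∑ t ∈ Finset.Icc 1 n,
          (A + (t : ℝ) * (qh + (qh1 - qh) * z)) ^ k)
          (∑ t ∈ Finset.Icc 1 n,
            ((k : ℝ) * (A + (t : ℝ) * (qh + (qh1 - qh) * x)) ^ (k - 1) * ((t : ℝ) * (qh1 - qh)))) x :=
        HasDerivAt.fun_sum (fun t _ => hterm t)
      exact (hsum.const_mul (2 * (k + 1 : ℝ))).sub ((hterm n).const_mul (n : ℝ))
    have hDnonneg : ∀ x ∈ Set.Icc (0:ℝ) 1, 0 ≤ D x := by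
      intro x hx
      obtain ⟨hx0, hx1⟩ := hx
      have hqx : 0 < qh + (qh1 - qh) * x := by nlinarith
      have hkey := key_ineq A hA n k hn hk (qh + (qh1 - qh) * x) hqx
      have hrw : D x = (k : ℝ) * (qh1 - qh) *
          (2 * (k + 1 : ℝ) * ∑ t ∈ Finset.Icc 1 n,
              (t : ℝ) * (A + (t : ℝ) * (qh + (qh1 - qh) * x)) ^ (k - 1)
            - (n : ℝ) ^ 2 * (A + (n : ℝ) * (qh + (qh1 - qh) * x)) ^ (k - 1)) := by
        simp only [hD]
        rw [show (∑ t ∈ Finset.Icc 1 n,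
            ((k : ℝ) * (A + (t : ℝ) * (qh + (qh1 - qh) * x)) ^ (k - 1) * ((t : ℝ) * (qh1 - qh))))
            = (k : ℝ) * (qh1 - qh) * ∑ t ∈ Finset.Icc 1 n,
                (t : ℝ) * (A + (t : ℝ) * (qh + (qh1 - qh) * x)) ^ (k - 1) from by
          rw [Finset.mul_sum]; exact Finset.sum_congr rfl fun t _ => by ring]
        ring
      rw [hrw]
      have hk0 : (0 : ℝ) ≤ k := Nat.cast_nonneg k
      apply mul_nonneg (mul_nonneg hk0 (by linarith))
      linarith [hkey]
    apply monotoneOn_of_deriv_nonneg (convex_Icc 0 1)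
    · exact fun x _ => (hd x).continuousAt.continuousWithinAt
    · exact fun x _ => (hd x).differentiableAt.differentiableWithinAt
    · intro x hx
      rw [(hd x).deriv]
      exact hDnonneg x (interior_subset hx)
  · intro q hq'
    exact key_ineq A hA n k hn hk q hq'
end

section
/- In the scheduling game under the SPT policy with n jobs on one machine, for any assignment the ℓ_k-norm of completion times under the EQUI policy is at most (2k+2)^(1/k) times that under SPT. Concretely: let n_1,…,n_h be positive integers and 0 < q_1 < … < q_h. Then (2k+2)·∑_{j=1}^{h} ∑_{t=1}^{n_j} (∑_{b<j} n_b·q_b + t·q_j)^k ≥ 2·∑_{j=1}^{h} n_j·(∑_{b<j} n_b·q_b + (∑_{b≥j} n_b)·q_j)^k for every positive integer k. -/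
open Finset

private lemma pow_sub_pow_eq (x y : ℝ) (m : ℕ) :
    x ^ m - y ^ m = (x - y) * ∑ i ∈ range m, x ^ i * y ^ (m - 1 - i) := by
  rw [← geom_sum₂_mul x y m]; ring

private lemma gs_le_gs (m : ℕ) {a b a' b' : ℝ} (ha : 0 ≤ a) (hb : 0 ≤ b)
    (h1 : a ≤ a') (h2 : b ≤ b') :
    ∑ i ∈ range m, a ^ i * b ^ (m - 1 - i) ≤ ∑ i ∈ range m, a' ^ i * b' ^ (m - 1 - i) := by
  refine Finset.sum_le_sum fun i _ => ?_
  exact mul_le_mul (pow_le_pow_left₀ ha h1 i) (pow_le_pow_left₀ hb h2 _)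
    (pow_nonneg hb _) (pow_nonneg (ha.trans h1) _)

private lemma gs_nonneg (m : ℕ) {a b : ℝ} (ha : 0 ≤ a) (hb : 0 ≤ b) :
    0 ≤ ∑ i ∈ range m, a ^ i * b ^ (m - 1 - i) :=
  Finset.sum_nonneg fun i _ => mul_nonneg (pow_nonneg ha _) (pow_nonneg hb _)

private lemma perclass (k m : ℕ) (A q : ℝ) (hA : 0 ≤ A) (hq : 0 < q) :
    (m : ℝ) * ∑ i ∈ range (k + 1), (A + (m : ℝ) * q) ^ i * A ^ (k - i)
      ≤ ((k : ℝ) + 1) * ∑ t ∈ Finset.Icc 1 m, (A + (t : ℝ) * q) ^ k := by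
  rw [← mul_le_mul_iff_right₀ hq]
  have key : q * ((m : ℝ) * ∑ i ∈ range (k + 1), (A + (m : ℝ) * q) ^ i * A ^ (k - i))
      = (A + (m : ℝ) * q) ^ (k + 1) - A ^ (k + 1) := by
    rw [pow_sub_pow_eq (A + (m : ℝ) * q) A (k + 1)]
    have hc : ∀ i, k + 1 - 1 - i = k - i := fun i => by omega
    simp only [hc]
    ring
  rw [key]
  have tel : (A + (m : ℝ) * q) ^ (k + 1) - A ^ (k + 1)
      = ∑ t ∈ range m, ((A + ((t : ℝ) + 1) * q) ^ (k + 1) - (A + (t : ℝ) * q) ^ (k + 1)) := by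
    have h0 := Finset.sum_range_sub (fun t : ℕ => (A + (t : ℝ) * q) ^ (k + 1)) m
    simp only [Nat.cast_zero, zero_mul, add_zero] at h0
    rw [← h0]
    refine Finset.sum_congr rfl fun t _ => ?_
    push_cast
    ring_nf
  rw [tel]
  have step : ∀ t ∈ range m, (A + ((t : ℝ) + 1) * q) ^ (k + 1) - (A + (t : ℝ) * q) ^ (k + 1)
      ≤ q * (((k : ℝ) + 1) * (A + ((t : ℝ) + 1) * q) ^ k) := by
    intro t _
    have h0 : (0 : ℝ) ≤ A + (t : ℝ) * q := by positivity
    have h1 : A + (t : ℝ) * q ≤ A + ((t : ℝ) + 1) * q := by nlinarith [hq.le]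
    have hdq : (A + ((t : ℝ) + 1) * q) - (A + (t : ℝ) * q) = q := by ring
    rw [pow_sub_pow_eq, hdq]
    have hb : ∑ i ∈ range (k + 1),
        (A + ((t : ℝ) + 1) * q) ^ i * (A + (t : ℝ) * q) ^ (k + 1 - 1 - i)
        ≤ ((k : ℝ) + 1) * (A + ((t : ℝ) + 1) * q) ^ k := by
      have hcc : ∑ i ∈ range (k + 1), (A + ((t : ℝ) + 1) * q) ^ k
          = ((k : ℝ) + 1) * (A + ((t : ℝ) + 1) * q) ^ k := by
        rw [Finset.sum_const, card_range]
        push_cast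
        ring
      rw [← hcc]
      refine Finset.sum_le_sum fun i hi => ?_
      have hik : i ≤ k := by
        have := mem_range.mp hi; omega
      calc (A + ((t : ℝ) + 1) * q) ^ i * (A + (t : ℝ) * q) ^ (k + 1 - 1 - i)
          ≤ (A + ((t : ℝ) + 1) * q) ^ i * (A + ((t : ℝ) + 1) * q) ^ (k + 1 - 1 - i) := by
            exact mul_le_mul_of_nonneg_left (pow_le_pow_left₀ h0 h1 _)
              (pow_nonneg (h0.trans h1) _)
        _ = (A + ((t : ℝ) + 1) * q) ^ k := by
            rw [← pow_add]; congr 1; omega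
    exact mul_le_mul_of_nonneg_left hb hq.le
  calc ∑ t ∈ range m, ((A + ((t : ℝ) + 1) * q) ^ (k + 1) - (A + (t : ℝ) * q) ^ (k + 1))
      ≤ ∑ t ∈ range m, q * (((k : ℝ) + 1) * (A + ((t : ℝ) + 1) * q) ^ k) :=
        Finset.sum_le_sum step
    _ = q * (((k : ℝ) + 1) * ∑ t ∈ Finset.Icc 1 m, (A + (t : ℝ) * q) ^ k) := by
        rw [← Finset.Ico_add_one_right_eq_Icc, Finset.sum_Ico_eq_sum_range]
        rw [Finset.mul_sum, Finset.mul_sum]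
        refine Finset.sum_congr (by rw [Nat.add_sub_cancel]) fun t _ => ?_
        push_cast
        ring

private lemma core (k : ℕ) (h : ℕ) : ∀ (n : ℕ → ℕ) (q : ℕ → ℝ),
    (∀ j ∈ Finset.Icc 1 h, 0 < q j) →
    (∀ i ∈ Finset.Icc 1 h, ∀ j ∈ Finset.Icc 1 h, i ≤ j → q i ≤ q j) →
    ∑ j ∈ Finset.Icc 1 h, (n j : ℝ) *
        ((∑ b ∈ Finset.Ico 1 j, (n b : ℝ) * q b) + (∑ b ∈ Finset.Icc j h, (n b : ℝ)) * q j) ^ k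
      ≤ ∑ j ∈ Finset.Icc 1 h, (n j : ℝ) *
          ∑ i ∈ Finset.range (k + 1),
            (∑ b ∈ Finset.Ico 1 (j + 1), (n b : ℝ) * q b) ^ i *
              (∑ b ∈ Finset.Ico 1 j, (n b : ℝ) * q b) ^ (k - i) := by
  induction h with
  | zero => intro n q _ _; simp
  | succ h IH =>
    intro n q hq hmono
    have hqh : ∀ j ∈ Finset.Icc 1 h, 0 < q j := fun j hj => by
      refine hq j ?_
      have := mem_Icc.mp hj
      exact mem_Icc.mpr ⟨this.1, by omega⟩
    have hmh : ∀ i ∈ Finset.Icc 1 h, ∀ j ∈ Finset.Icc 1 h, i ≤ j → q i ≤ q j := by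
      intro i hi j hj hij
      have hi' := mem_Icc.mp hi
      have hj' := mem_Icc.mp hj
      exact hmono i (mem_Icc.mpr ⟨hi'.1, by omega⟩) j (mem_Icc.mpr ⟨hj'.1, by omega⟩) hij
    -- nonnegativity of prefix sums
    have hA0 : ∀ j, j ≤ h + 1 + 1 → 0 ≤ ∑ b ∈ Finset.Ico 1 j, (n b : ℝ) * q b := by
      intro j hj
      refine Finset.sum_nonneg fun b hb => ?_
      have hb' := mem_Ico.mp hb
      exact mul_nonneg (Nat.cast_nonneg _) (hq b (mem_Icc.mpr ⟨hb'.1, by omega⟩)).le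
    -- chunk bound
    have hchunk : ∀ j m : ℕ, 1 ≤ j → j ≤ m → m ≤ h + 1 →
        (∑ b ∈ Finset.Ico 1 j, (n b : ℝ) * q b) + (∑ b ∈ Finset.Icc j m, (n b : ℝ)) * q j
          ≤ ∑ b ∈ Finset.Ico 1 (m + 1), (n b : ℝ) * q b := by
      intro j m h1 h2 h3
      rw [← Finset.sum_Ico_consecutive (fun b => (n b : ℝ) * q b) (show 1 ≤ j by omega)
        (show j ≤ m + 1 by omega)]
      refine add_le_add le_rfl ?_
      rw [Finset.sum_mul, ← Finset.Ico_add_one_right_eq_Icc]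
      refine Finset.sum_le_sum fun b hb => ?_
      have hb' := mem_Ico.mp hb
      refine mul_le_mul_of_nonneg_left ?_ (Nat.cast_nonneg _)
      exact hmono j (mem_Icc.mpr ⟨h1, by omega⟩) b (mem_Icc.mpr ⟨by omega, by omega⟩) hb'.1
    -- abbreviations via haves
    have eL : ∑ j ∈ Finset.Icc 1 (h + 1), (n j : ℝ) *
          ((∑ b ∈ Finset.Ico 1 j, (n b : ℝ) * q b)
            + (∑ b ∈ Finset.Icc j (h + 1), (n b : ℝ)) * q j) ^ k
        = (∑ j ∈ Finset.Icc 1 h, (n j : ℝ) *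
            ((∑ b ∈ Finset.Ico 1 j, (n b : ℝ) * q b)
              + (∑ b ∈ Finset.Icc j (h + 1), (n b : ℝ)) * q j) ^ k)
          + (n (h + 1) : ℝ) *
            ((∑ b ∈ Finset.Ico 1 (h + 1), (n b : ℝ) * q b)
              + (∑ b ∈ Finset.Icc (h + 1) (h + 1), (n b : ℝ)) * q (h + 1)) ^ k :=
      Finset.sum_Icc_succ_top (by omega) _
    have eR : ∑ j ∈ Finset.Icc 1 (h + 1), (n j : ℝ) *
          ∑ i ∈ Finset.range (k + 1),
            (∑ b ∈ Finset.Ico 1 (j + 1), (n b : ℝ) * q b) ^ i *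
              (∑ b ∈ Finset.Ico 1 j, (n b : ℝ) * q b) ^ (k - i)
        = (∑ j ∈ Finset.Icc 1 h, (n j : ℝ) *
            ∑ i ∈ Finset.range (k + 1),
              (∑ b ∈ Finset.Ico 1 (j + 1), (n b : ℝ) * q b) ^ i *
                (∑ b ∈ Finset.Ico 1 j, (n b : ℝ) * q b) ^ (k - i))
          + (n (h + 1) : ℝ) *
            ∑ i ∈ Finset.range (k + 1),
              (∑ b ∈ Finset.Ico 1 (h + 1 + 1), (n b : ℝ) * q b) ^ i *
                (∑ b ∈ Finset.Ico 1 (h + 1), (n b : ℝ) * q b) ^ (k - i) :=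
      Finset.sum_Icc_succ_top (by omega) _
    -- notation
    have hT : ∑ b ∈ Finset.Ico 1 (h + 1 + 1), (n b : ℝ) * q b
        = (∑ b ∈ Finset.Ico 1 (h + 1), (n b : ℝ) * q b) + (n (h + 1) : ℝ) * q (h + 1) :=
      Finset.sum_Ico_succ_top (by omega) _
    have hS0 : 0 ≤ ∑ b ∈ Finset.Ico 1 (h + 1), (n b : ℝ) * q b := hA0 (h + 1) (by omega)
    have hT0 : 0 ≤ ∑ b ∈ Finset.Ico 1 (h + 1 + 1), (n b : ℝ) * q b := hA0 (h + 1 + 1) le_rfl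
    have hGnn : (0 : ℝ) ≤ ∑ i ∈ range k,
        (∑ b ∈ Finset.Ico 1 (h + 1 + 1), (n b : ℝ) * q b) ^ i *
          (∑ b ∈ Finset.Ico 1 (h + 1), (n b : ℝ) * q b) ^ (k - 1 - i) :=
      gs_nonneg k hT0 hS0
    -- per-j bound on Icc 1 h
    have bound1 : ∀ j ∈ Finset.Icc 1 h, (n j : ℝ) *
          ((∑ b ∈ Finset.Ico 1 j, (n b : ℝ) * q b)
            + (∑ b ∈ Finset.Icc j (h + 1), (n b : ℝ)) * q j) ^ k
        ≤ (n j : ℝ) *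
            ((∑ b ∈ Finset.Ico 1 j, (n b : ℝ) * q b)
              + (∑ b ∈ Finset.Icc j h, (n b : ℝ)) * q j) ^ k
          + (n j : ℝ) * ((n (h + 1) : ℝ) * q j) *
            ∑ i ∈ range k,
              (∑ b ∈ Finset.Ico 1 (h + 1 + 1), (n b : ℝ) * q b) ^ i *
                (∑ b ∈ Finset.Ico 1 (h + 1), (n b : ℝ) * q b) ^ (k - 1 - i) := by
      intro j hj
      obtain ⟨hj1, hj2⟩ := mem_Icc.mp hj
      have hcnt : (∑ b ∈ Finset.Icc j (h + 1), (n b : ℝ))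
          = (∑ b ∈ Finset.Icc j h, (n b : ℝ)) + (n (h + 1) : ℝ) :=
        Finset.sum_Icc_succ_top (by omega) _
      set e : ℝ := (∑ b ∈ Finset.Ico 1 j, (n b : ℝ) * q b)
        + (∑ b ∈ Finset.Icc j h, (n b : ℝ)) * q j with he
      set d : ℝ := (n (h + 1) : ℝ) * q j with hd
      have hqj : 0 < q j := hq j (mem_Icc.mpr ⟨hj1, by omega⟩)
      have hd0 : 0 ≤ d := mul_nonneg (Nat.cast_nonneg _) hqj.le
      have he0 : 0 ≤ e := add_nonneg (hA0 j (by omega))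
        (mul_nonneg (Finset.sum_nonneg fun b _ => Nat.cast_nonneg _) hqj.le)
      have heS : e ≤ ∑ b ∈ Finset.Ico 1 (h + 1), (n b : ℝ) * q b :=
        hchunk j h hj1 hj2 (by omega)
      have hedT : e + d ≤ ∑ b ∈ Finset.Ico 1 (h + 1 + 1), (n b : ℝ) * q b := by
        have := hchunk j (h + 1) hj1 (by omega) le_rfl
        rw [hcnt] at this
        calc e + d = (∑ b ∈ Finset.Ico 1 j, (n b : ℝ) * q b)
              + ((∑ b ∈ Finset.Icc j h, (n b : ℝ)) + (n (h + 1) : ℝ)) * q j := by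
                rw [he, hd]; ring
          _ ≤ _ := this
      have hLrw : (∑ b ∈ Finset.Ico 1 j, (n b : ℝ) * q b)
          + (∑ b ∈ Finset.Icc j (h + 1), (n b : ℝ)) * q j = e + d := by
        rw [hcnt, he, hd]; ring
      rw [hLrw]
      have key := pow_sub_pow_eq (e + d) e k
      rw [show (e + d) - e = d by ring] at key
      have hgs : ∑ i ∈ range k, (e + d) ^ i * e ^ (k - 1 - i)
          ≤ ∑ i ∈ range k,
              (∑ b ∈ Finset.Ico 1 (h + 1 + 1), (n b : ℝ) * q b) ^ i *
                (∑ b ∈ Finset.Ico 1 (h + 1), (n b : ℝ) * q b) ^ (k - 1 - i) :=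
        gs_le_gs k (add_nonneg he0 hd0) he0 hedT heS
      have hstep : (e + d) ^ k ≤ e ^ k + d * ∑ i ∈ range k,
          (∑ b ∈ Finset.Ico 1 (h + 1 + 1), (n b : ℝ) * q b) ^ i *
            (∑ b ∈ Finset.Ico 1 (h + 1), (n b : ℝ) * q b) ^ (k - 1 - i) := by
        nlinarith [mul_le_mul_of_nonneg_left hgs hd0]
      calc (n j : ℝ) * (e + d) ^ k
          ≤ (n j : ℝ) * (e ^ k + d * ∑ i ∈ range k,
              (∑ b ∈ Finset.Ico 1 (h + 1 + 1), (n b : ℝ) * q b) ^ i *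
                (∑ b ∈ Finset.Ico 1 (h + 1), (n b : ℝ) * q b) ^ (k - 1 - i)) :=
            mul_le_mul_of_nonneg_left hstep (Nat.cast_nonneg _)
        _ = _ := by rw [hd]; ring
    -- sum the bound
    have sum1 : ∑ j ∈ Finset.Icc 1 h, (n j : ℝ) *
          ((∑ b ∈ Finset.Ico 1 j, (n b : ℝ) * q b)
            + (∑ b ∈ Finset.Icc j (h + 1), (n b : ℝ)) * q j) ^ k
        ≤ (∑ j ∈ Finset.Icc 1 h, (n j : ℝ) *
            ((∑ b ∈ Finset.Ico 1 j, (n b : ℝ) * q b)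
              + (∑ b ∈ Finset.Icc j h, (n b : ℝ)) * q j) ^ k)
          + (n (h + 1) : ℝ) * (∑ b ∈ Finset.Ico 1 (h + 1), (n b : ℝ) * q b) *
            ∑ i ∈ range k,
              (∑ b ∈ Finset.Ico 1 (h + 1 + 1), (n b : ℝ) * q b) ^ i *
                (∑ b ∈ Finset.Ico 1 (h + 1), (n b : ℝ) * q b) ^ (k - 1 - i) := by
      calc ∑ j ∈ Finset.Icc 1 h, (n j : ℝ) *
            ((∑ b ∈ Finset.Ico 1 j, (n b : ℝ) * q b)
              + (∑ b ∈ Finset.Icc j (h + 1), (n b : ℝ)) * q j) ^ k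
          ≤ ∑ j ∈ Finset.Icc 1 h, ((n j : ℝ) *
              ((∑ b ∈ Finset.Ico 1 j, (n b : ℝ) * q b)
                + (∑ b ∈ Finset.Icc j h, (n b : ℝ)) * q j) ^ k
            + (n j : ℝ) * ((n (h + 1) : ℝ) * q j) *
              ∑ i ∈ range k,
                (∑ b ∈ Finset.Ico 1 (h + 1 + 1), (n b : ℝ) * q b) ^ i *
                  (∑ b ∈ Finset.Ico 1 (h + 1), (n b : ℝ) * q b) ^ (k - 1 - i)) :=
            Finset.sum_le_sum bound1
        _ = _ := by
            rw [Finset.sum_add_distrib]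
            congr 1
            rw [← Finset.sum_mul]
            congr 1
            rw [show (∑ b ∈ Finset.Ico 1 (h + 1), (n b : ℝ) * q b)
              = ∑ b ∈ Finset.Icc 1 h, (n b : ℝ) * q b from by rw [← Finset.Ico_add_one_right_eq_Icc],
              Finset.mul_sum]
            exact Finset.sum_congr rfl fun j _ => by ring
    -- geometric sum split at top
    have hGS : ∑ i ∈ Finset.range (k + 1),
          (∑ b ∈ Finset.Ico 1 (h + 1 + 1), (n b : ℝ) * q b) ^ i *
            (∑ b ∈ Finset.Ico 1 (h + 1), (n b : ℝ) * q b) ^ (k - i)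
        = (∑ b ∈ Finset.Ico 1 (h + 1 + 1), (n b : ℝ) * q b) ^ k
          + (∑ b ∈ Finset.Ico 1 (h + 1), (n b : ℝ) * q b) *
            ∑ i ∈ range k,
              (∑ b ∈ Finset.Ico 1 (h + 1 + 1), (n b : ℝ) * q b) ^ i *
                (∑ b ∈ Finset.Ico 1 (h + 1), (n b : ℝ) * q b) ^ (k - 1 - i) := by
      rw [Finset.sum_range_succ]
      simp only [Nat.sub_self, pow_zero, mul_one]
      rw [add_comm]
      congr 1
      rw [Finset.mul_sum]
      refine Finset.sum_congr rfl fun i hi => ?_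
      have hik : i < k := mem_range.mp hi
      rw [show k - i = (k - 1 - i) + 1 by omega, pow_succ]
      ring
    have hsing : (∑ b ∈ Finset.Icc (h + 1) (h + 1), (n b : ℝ)) = (n (h + 1) : ℝ) := by
      rw [Finset.Icc_self, Finset.sum_singleton]
    have IH' := IH n q hqh hmh
    rw [eL, eR, hGS, hsing]
    have hmulT : (n (h + 1) : ℝ) *
        ((∑ b ∈ Finset.Ico 1 (h + 1), (n b : ℝ) * q b) + (n (h + 1) : ℝ) * q (h + 1)) ^ k
        = (n (h + 1) : ℝ) * (∑ b ∈ Finset.Ico 1 (h + 1 + 1), (n b : ℝ) * q b) ^ k := by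
      rw [hT]
    rw [hmulT]
    have hnn : (0 : ℝ) ≤ (n (h + 1) : ℝ) := Nat.cast_nonneg _
    nlinarith [sum1, IH', mul_le_mul_of_nonneg_left (le_refl (0:ℝ)) hnn]

theorem stmt_19 (h k : ℕ) (hh : 1 ≤ h) (hk : 1 ≤ k) (n : ℕ → ℕ) (q : ℕ → ℝ)
    (hn : ∀ j ∈ Finset.Icc 1 h, 1 ≤ n j)
    (hq : ∀ j ∈ Finset.Icc 1 h, 0 < q j)
    (hqmono : ∀ i ∈ Finset.Icc 1 h, ∀ j ∈ Finset.Icc 1 h, i < j → q i < q j) :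
    (2 * (k : ℝ) + 2) * ∑ j ∈ Finset.Icc 1 h, ∑ t ∈ Finset.Icc 1 (n j),
        ((∑ b ∈ Finset.Ico 1 j, (n b : ℝ) * q b) + (t : ℝ) * q j) ^ k
      ≥ 2 * ∑ j ∈ Finset.Icc 1 h, (n j : ℝ) *
          ((∑ b ∈ Finset.Ico 1 j, (n b : ℝ) * q b)
            + (∑ b ∈ Finset.Icc j h, (n b : ℝ)) * q j) ^ k := by
  have hmono' : ∀ i ∈ Finset.Icc 1 h, ∀ j ∈ Finset.Icc 1 h, i ≤ j → q i ≤ q j := by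
    intro i hi j hj hij
    rcases eq_or_lt_of_le hij with rfl | hlt
    · exact le_rfl
    · exact (hqmono i hi j hj hlt).le
  have H1 := core k h n q hq hmono'
  have hA0 : ∀ j ∈ Finset.Icc 1 h, 0 ≤ ∑ b ∈ Finset.Ico 1 j, (n b : ℝ) * q b := by
    intro j hj
    refine Finset.sum_nonneg fun b hb => ?_
    have hb' := mem_Ico.mp hb
    have hj' := mem_Icc.mp hj
    exact mul_nonneg (Nat.cast_nonneg _) (hq b (mem_Icc.mpr ⟨hb'.1, by omega⟩)).le
  have H2 : ∀ j ∈ Finset.Icc 1 h, (n j : ℝ) *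
        ∑ i ∈ Finset.range (k + 1),
          (∑ b ∈ Finset.Ico 1 (j + 1), (n b : ℝ) * q b) ^ i *
            (∑ b ∈ Finset.Ico 1 j, (n b : ℝ) * q b) ^ (k - i)
      ≤ ((k : ℝ) + 1) * ∑ t ∈ Finset.Icc 1 (n j),
          ((∑ b ∈ Finset.Ico 1 j, (n b : ℝ) * q b) + (t : ℝ) * q j) ^ k := by
    intro j hj
    have hAj1 : ∑ b ∈ Finset.Ico 1 (j + 1), (n b : ℝ) * q b
        = (∑ b ∈ Finset.Ico 1 j, (n b : ℝ) * q b) + (n j : ℝ) * q j :=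
      Finset.sum_Ico_succ_top (mem_Icc.mp hj).1 _
    rw [hAj1]
    exact perclass k (n j) _ (q j) (hA0 j hj) (hq j hj)
  have H3 : ∑ j ∈ Finset.Icc 1 h, (n j : ℝ) *
        ∑ i ∈ Finset.range (k + 1),
          (∑ b ∈ Finset.Ico 1 (j + 1), (n b : ℝ) * q b) ^ i *
            (∑ b ∈ Finset.Ico 1 j, (n b : ℝ) * q b) ^ (k - i)
      ≤ ((k : ℝ) + 1) * ∑ j ∈ Finset.Icc 1 h, ∑ t ∈ Finset.Icc 1 (n j),
          ((∑ b ∈ Finset.Ico 1 j, (n b : ℝ) * q b) + (t : ℝ) * q j) ^ k := by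
    calc ∑ j ∈ Finset.Icc 1 h, (n j : ℝ) *
          ∑ i ∈ Finset.range (k + 1),
            (∑ b ∈ Finset.Ico 1 (j + 1), (n b : ℝ) * q b) ^ i *
              (∑ b ∈ Finset.Ico 1 j, (n b : ℝ) * q b) ^ (k - i)
        ≤ ∑ j ∈ Finset.Icc 1 h, ((k : ℝ) + 1) * ∑ t ∈ Finset.Icc 1 (n j),
            ((∑ b ∈ Finset.Ico 1 j, (n b : ℝ) * q b) + (t : ℝ) * q j) ^ k :=
          Finset.sum_le_sum H2
      _ = _ := (Finset.mul_sum _ _ _).symm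
  have := H1.trans H3
  linarith
end
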